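/- arXiv:1209.5912 — 5 statements merged into one kernel-verified Lean document; each statement's English description precedes it below -/
import Mathlib

section
/- Let 𝒦 = {K₁, …, K_M} be a finite set of row-stochastic N×N real matrices, each with strictly positive diagonal entries, let p₁, …, p_M be strictly positive reals summing to 1, and let (K(t))_{t≥1} be an i.i.d. sequence of random matrices on a probability space with ℙ[K(t) = Kᵢ] = pᵢ for each i. Set P(t) = K(1)K(2)⋯K(t); given x(0) ∈ ℝᴺ define s(t)ᵀ = x(0)ᵀP(t), w(t)ᵀ = 𝟙ᵀP(t), x(t) = s(t)/w(t) (entrywise quotient, well defined since every entry of w(t) is strictly positive because the matrices in 𝒦 have positive diagonals), and x_ave = (1/N)𝟙ᵀx(0). Then the following are equivalent: (a) for every initial vector x(0) ∈ ℝᴺ, x(t) converges almost surely to x_ave·𝟙 as t → ∞; (b) the matrix Σᵢ pᵢKᵢ is primitive. -/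
open Matrix Finset MeasureTheory Filter

/-- A square real matrix is row-stochastic if it has nonnegative entries and
each of its rows sums to 1. -/
def RowStochastic {N : ℕ} (K : Matrix (Fin N) (Fin N) ℝ) : Prop :=
  (∀ i j, 0 ≤ K i j) ∧ ∀ i, ∑ j, K i j = 1

/-- A nonnegative square matrix `T` is primitive if `T ^ m` has all entries
strictly positive for some integer `m ≥ 1`. -/
def IsPrimitive {n : Type*} [Fintype n] [DecidableEq n] (T : Matrix n n ℝ) : Prop :=
  ∃ m : ℕ, 1 ≤ m ∧ ∀ i j, 0 < (T ^ m) i j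

section AuxStmt14
variable {N : ℕ}

/-- nonnegative with positive diagonal -/
def Stmt14PD (A : Matrix (Fin N) (Fin N) ℝ) : Prop :=
  (∀ i j, 0 ≤ A i j) ∧ ∀ i, 0 < A i i

lemma stmt14_RS_one : RowStochastic (1 : Matrix (Fin N) (Fin N) ℝ) := by
  constructor
  · intro i j
    by_cases h : i = j <;> simp [Matrix.one_apply, h]
  · intro i; simp [Matrix.one_apply]

lemma stmt14_RS_mul {A B : Matrix (Fin N) (Fin N) ℝ} (hA : RowStochastic A)
    (hB : RowStochastic B) : RowStochastic (A * B) := by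
  constructor
  · intro i j
    rw [Matrix.mul_apply]
    exact Finset.sum_nonneg fun k _ => mul_nonneg (hA.1 i k) (hB.1 k j)
  · intro i
    simp only [Matrix.mul_apply]
    rw [Finset.sum_comm]
    calc ∑ k, ∑ j, A i k * B k j = ∑ k, A i k * ∑ j, B k j := by
          simp [Finset.mul_sum]
      _ = 1 := by simp [hB.2, hA.2 i]

lemma stmt14_RS_listProd {l : List (Matrix (Fin N) (Fin N) ℝ)}
    (h : ∀ B ∈ l, RowStochastic B) : RowStochastic l.prod := by
  induction l with
  | nil => simpa using stmt14_RS_one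
  | cons a t ih =>
    rw [List.prod_cons]
    exact stmt14_RS_mul (h a (by simp)) (ih fun B hB => h B (by simp [hB]))

lemma stmt14_PD_one : Stmt14PD (1 : Matrix (Fin N) (Fin N) ℝ) := by
  constructor
  · intro i j; by_cases h : i = j <;> simp [Matrix.one_apply, h]
  · intro i; simp [Matrix.one_apply]

lemma stmt14_mul_entry_ge {A B : Matrix (Fin N) (Fin N) ℝ} (hA : ∀ i j, 0 ≤ A i j)
    (hB : ∀ i j, 0 ≤ B i j) (i k j : Fin N) :
    A i k * B k j ≤ (A * B) i j := by
  rw [Matrix.mul_apply]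
  exact Finset.single_le_sum (fun k' _ => mul_nonneg (hA i k') (hB k' j)) (Finset.mem_univ k)

lemma stmt14_PD_mul {A B : Matrix (Fin N) (Fin N) ℝ} (hA : Stmt14PD A) (hB : Stmt14PD B) :
    Stmt14PD (A * B) := by
  refine ⟨fun i j => ?_, fun i => ?_⟩
  · rw [Matrix.mul_apply]
    exact Finset.sum_nonneg fun k _ => mul_nonneg (hA.1 i k) (hB.1 k j)
  · exact lt_of_lt_of_le (mul_pos (hA.2 i) (hB.2 i)) (stmt14_mul_entry_ge hA.1 hB.1 i i i)

lemma stmt14_PD_listProd {l : List (Matrix (Fin N) (Fin N) ℝ)}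
    (h : ∀ B ∈ l, Stmt14PD B) : Stmt14PD l.prod := by
  induction l with
  | nil => simpa using stmt14_PD_one
  | cons a t ih =>
    rw [List.prod_cons]
    exact stmt14_PD_mul (h a (by simp)) (ih fun B hB => h B (by simp [hB]))

lemma stmt14_PD_pow {A : Matrix (Fin N) (Fin N) ℝ} (hA : Stmt14PD A) (m : ℕ) :
    Stmt14PD (A ^ m) := by
  induction m with
  | zero => simpa using stmt14_PD_one
  | succ n ih => rw [pow_succ]; exact stmt14_PD_mul ih hA

lemma stmt14_pow_pos_mono {A : Matrix (Fin N) (Fin N) ℝ} (hA : Stmt14PD A) {m m' : ℕ}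
    (h : m ≤ m') {i j : Fin N} (hpos : 0 < (A ^ m) i j) : 0 < (A ^ m') i j := by
  obtain ⟨d, rfl⟩ := Nat.exists_eq_add_of_le h
  rw [pow_add]
  calc (0:ℝ) < (A ^ m) i j * (A ^ d) j j := mul_pos hpos ((stmt14_PD_pow hA d).2 j)
    _ ≤ (A ^ m * A ^ d) i j :=
        stmt14_mul_entry_ge (stmt14_PD_pow hA m).1 (stmt14_PD_pow hA d).1 i j j

/-- a nonnegative matrix with positive diagonal that is not primitive is reducible -/
lemma stmt14_not_primitive_reducible {A : Matrix (Fin N) (Fin N) ℝ} (hA : Stmt14PD A)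
    (h : ¬ _root_.IsPrimitive A) :
    ∃ S : Finset (Fin N), S.Nonempty ∧ S ≠ Finset.univ ∧
      ∀ i ∈ S, ∀ j ∉ S, A i j = 0 := by
  classical
  by_cases hall : ∀ i j : Fin N, ∃ m, 0 < (A ^ m) i j
  · exfalso
    apply h
    choose f hf using hall
    refine ⟨(Finset.univ.sup fun ij : Fin N × Fin N => f ij.1 ij.2) + 1, le_add_self, ?_⟩
    intro i j
    refine stmt14_pow_pos_mono hA ?_ (hf i j)
    calc f i j ≤ Finset.univ.sup (fun ij : Fin N × Fin N => f ij.1 ij.2) :=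
          Finset.le_sup (f := fun ij : Fin N × Fin N => f ij.1 ij.2) (Finset.mem_univ (i, j))
      _ ≤ _ := Nat.le_succ _
  · push_neg at hall
    obtain ⟨i0, j0, hij⟩ := hall
    refine ⟨Finset.univ.filter fun j => ∃ m, 0 < (A ^ m) i0 j, ?_, ?_, ?_⟩
    · exact ⟨i0, by simp; exact ⟨0, by simp [Matrix.one_apply]⟩⟩
    · intro hcontr
      have : j0 ∈ Finset.univ.filter fun j => ∃ m, 0 < (A ^ m) i0 j := by
        rw [hcontr]; exact Finset.mem_univ _
      rw [Finset.mem_filter] at this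
      obtain ⟨m, hm⟩ := this.2
      exact absurd hm (not_lt.2 (hij m))
    · intro i hi j hj
      rw [Finset.mem_filter] at hi hj
      by_contra hne
      have hApos : 0 < A i j := lt_of_le_of_ne (hA.1 i j) (Ne.symm hne)
      obtain ⟨m, hm⟩ := hi.2
      refine hj ⟨Finset.mem_univ _, m + 1, ?_⟩
      rw [pow_succ]
      calc (0:ℝ) < (A ^ m) i0 i * A i j := mul_pos hm hApos
        _ ≤ (A ^ m * A) i0 j := stmt14_mul_entry_ge (stmt14_PD_pow hA m).1 hA.1 i0 i j

/-- products of matrices that vanish on `S × Sᶜ` also vanish there -/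
lemma stmt14_prod_block_zero {S : Finset (Fin N)} {l : List (Matrix (Fin N) (Fin N) ℝ)}
    (h : ∀ B ∈ l, (∀ i j, 0 ≤ B i j) ∧ ∀ i ∈ S, ∀ j ∉ S, B i j = 0) :
    ∀ i ∈ S, ∀ j ∉ S, l.prod i j = 0 := by
  induction l with
  | nil =>
    intro i hi j hj
    have hij : i ≠ j := fun hij => hj (hij ▸ hi)
    simp [Matrix.one_apply, hij]
  | cons a t ih =>
    intro i hi j hj
    rw [List.prod_cons, Matrix.mul_apply]
    refine Finset.sum_eq_zero fun k _ => ?_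
    by_cases hk : k ∈ S
    · rw [ih (fun B hB => h B (by simp [hB])) k hk j hj, mul_zero]
    · rw [(h a (by simp)).2 i hi k hk, zero_mul]

/-- non-expansion of row differences under right multiplication by a stochastic matrix -/
lemma stmt14_contract_one {B : Matrix (Fin N) (Fin N) ℝ} (hB : RowStochastic B)
    (c : Fin N → ℝ) : ∑ j, |∑ k, c k * B k j| ≤ ∑ k, |c k| := by
  calc ∑ j, |∑ k, c k * B k j| ≤ ∑ j, ∑ k, |c k| * B k j := by
        refine Finset.sum_le_sum fun j _ => ?_
        refine (Finset.abs_sum_le_sum_abs _ _).trans ?_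
        refine Finset.sum_le_sum fun k _ => ?_
        rw [abs_mul, abs_of_nonneg (hB.1 k j)]
    _ = ∑ k, |c k| * ∑ j, B k j := by rw [Finset.sum_comm]; simp [Finset.mul_sum]
    _ = ∑ k, |c k| := by simp [hB.2]

/-- contraction of balanced row differences through a strictly positive stochastic matrix -/
lemma stmt14_contract_delta {Q : Matrix (Fin N) (Fin N) ℝ} (hQ : RowStochastic Q)
    {δ : ℝ} (hδ : ∀ i j, δ ≤ Q i j) (c : Fin N → ℝ) (hc : ∑ k, c k = 0) :
    ∑ j, |∑ k, c k * Q k j| ≤ (1 - N * δ) * ∑ k, |c k| := by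
  have key : ∀ j, (∑ k, c k * Q k j) = ∑ k, c k * (Q k j - δ) := by
    intro j
    simp only [mul_sub]
    rw [Finset.sum_sub_distrib, ← Finset.sum_mul, hc, zero_mul, sub_zero]
  calc ∑ j, |∑ k, c k * Q k j| = ∑ j, |∑ k, c k * (Q k j - δ)| := by simp only [key]
    _ ≤ ∑ j, ∑ k, |c k| * (Q k j - δ) := by
        refine Finset.sum_le_sum fun j _ => ?_
        refine (Finset.abs_sum_le_sum_abs _ _).trans ?_
        refine Finset.sum_le_sum fun k _ => ?_
        rw [abs_mul, abs_of_nonneg (sub_nonneg.2 (hδ k j))]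
    _ = ∑ k, |c k| * ∑ j, (Q k j - δ) := by
        rw [Finset.sum_comm]
        exact Finset.sum_congr rfl fun k _ => (Finset.mul_sum _ _ _).symm
    _ = ∑ k, |c k| * (1 - N * δ) := by
        refine Finset.sum_congr rfl fun k _ => ?_
        rw [Finset.sum_sub_distrib, hQ.2 k, Finset.sum_const, Finset.card_univ,
          Fintype.card_fin, nsmul_eq_mul]
    _ = (1 - N * δ) * ∑ k, |c k| := by rw [← Finset.sum_mul]; ring

/-- row differences of a stochastic matrix are at most 2 in ℓ¹ -/
lemma stmt14_RS_diff_le_two {A : Matrix (Fin N) (Fin N) ℝ} (hA : RowStochastic A)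
    (i i' : Fin N) : ∑ j, |A i j - A i' j| ≤ 2 := by
  calc ∑ j, |A i j - A i' j| ≤ ∑ j, (A i j + A i' j) := by
        refine Finset.sum_le_sum fun j _ => ?_
        calc |A i j - A i' j| ≤ |A i j| + |A i' j| := abs_sub _ _
          _ = A i j + A i' j := by
              rw [abs_of_nonneg (hA.1 i j), abs_of_nonneg (hA.1 i' j)]
    _ = 2 := by rw [Finset.sum_add_distrib, hA.2 i, hA.2 i']; norm_num

/-- the core deterministic estimate -/
lemma stmt14_key_estimate (hN : 1 ≤ N) {A B : Matrix (Fin N) (Fin N) ℝ} {δ ε : ℝ}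
    (hδ : 0 < δ) (hAδ : ∀ i k, δ ≤ A i k)
    (hAε : ∀ i i', ∑ j, |A i j - A i' j| ≤ ε)
    (hB : (∀ i j, 0 ≤ B i j) ∧ ∀ j, 0 < B j j)
    (x0 : Fin N → ℝ) (j : Fin N) :
    |(∑ i, (A * B) i j * x0 i) / (∑ i, (A * B) i j) - (N : ℝ)⁻¹ * ∑ i, x0 i|
      ≤ ε / (N * δ) * ∑ i, |x0 i| := by
  have hNpos : (0:ℝ) < N := by exact_mod_cast hN
  set C := A * B with hC
  obtain ⟨s, hs⟩ : ∃ s : ℝ, s = ∑ k, B k j := ⟨_, rfl⟩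
  have hspos : 0 < s := by
    rw [hs]
    refine lt_of_lt_of_le (hB.2 j) ?_
    exact Finset.single_le_sum (fun k _ => hB.1 k j) (Finset.mem_univ j)
  have i0 : Fin N := ⟨0, hN⟩
  have hεnn : 0 ≤ ε := le_trans (Finset.sum_nonneg fun _ _ => abs_nonneg _) (hAε i0 i0)
  have hlow : ∀ i, δ * s ≤ C i j := by
    intro i
    rw [hC, Matrix.mul_apply, hs, Finset.mul_sum]
    exact Finset.sum_le_sum fun k _ => mul_le_mul_of_nonneg_right (hAδ i k) (hB.1 k j)
  obtain ⟨S, hSdef⟩ : ∃ S : ℝ, S = ∑ i, C i j := ⟨_, rfl⟩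
  have hSlow : (N : ℝ) * δ * s ≤ S := by
    rw [hSdef]
    calc (N:ℝ) * δ * s = ∑ _i : Fin N, δ * s := by
          simp [Finset.sum_const, mul_assoc]
      _ ≤ ∑ i, C i j := Finset.sum_le_sum fun i _ => hlow i
  have hSpos : 0 < S := lt_of_lt_of_le (by positivity) hSlow
  have hdiff : ∀ i i', |C i j - C i' j| ≤ ε * s := by
    intro i i'
    have : C i j - C i' j = ∑ k, (A i k - A i' k) * B k j := by
      rw [hC, Matrix.mul_apply, Matrix.mul_apply, ← Finset.sum_sub_distrib]
      congr 1; ext k; ring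
    rw [this]
    calc |∑ k, (A i k - A i' k) * B k j| ≤ ∑ k, |A i k - A i' k| * B k j := by
          refine (Finset.abs_sum_le_sum_abs _ _).trans ?_
          refine Finset.sum_le_sum fun k _ => ?_
          rw [abs_mul, abs_of_nonneg (hB.1 k j)]
      _ ≤ ∑ k, ε * B k j := by
          refine Finset.sum_le_sum fun k _ => ?_
          refine mul_le_mul_of_nonneg_right ?_ (hB.1 k j)
          calc |A i k - A i' k| ≤ ∑ k', |A i k' - A i' k'| :=
                Finset.single_le_sum (f := fun k' => |A i k' - A i' k'|)
                  (fun k' _ => abs_nonneg _) (Finset.mem_univ k)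
            _ ≤ ε := hAε i i'
      _ = ε * s := by rw [hs, Finset.mul_sum]
  have hw : ∀ i, |C i j - S / N| ≤ ε * s := by
    intro i
    have h1 : C i j - S / N = (∑ i', (C i j - C i' j)) / N := by
      rw [Finset.sum_sub_distrib, ← hSdef, Finset.sum_const, Finset.card_univ,
        Fintype.card_fin, nsmul_eq_mul]
      field_simp
    rw [h1, abs_div, abs_of_pos hNpos, div_le_iff₀ hNpos]
    calc |∑ i', (C i j - C i' j)| ≤ ∑ i' : Fin N, |C i j - C i' j| :=
          Finset.abs_sum_le_sum_abs _ _
      _ ≤ ∑ _i' : Fin N, ε * s := Finset.sum_le_sum fun i' _ => hdiff i i'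
      _ = (N:ℝ) * (ε * s) := by simp [mul_comm]
      _ = ε * s * N := by ring
  have hSne : S ≠ 0 := ne_of_gt hSpos
  have hrewrite : (∑ i, C i j * x0 i) / S - (N : ℝ)⁻¹ * ∑ i, x0 i
      = ∑ i, (C i j - S / N) * x0 i / S := by
    rw [Finset.sum_div, Finset.mul_sum, ← Finset.sum_sub_distrib]
    refine Finset.sum_congr rfl fun i _ => ?_
    field_simp
  rw [← hSdef, hrewrite]
  calc |∑ i, (C i j - S / N) * x0 i / S| ≤ ∑ i, |C i j - S / N| * |x0 i| / S := by
        refine (Finset.abs_sum_le_sum_abs _ _).trans ?_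
        refine Finset.sum_le_sum fun i _ => ?_
        rw [abs_div, abs_mul, abs_of_pos hSpos]
    _ ≤ ∑ i, (ε * s) * |x0 i| / ((N:ℝ) * δ * s) := by
        refine Finset.sum_le_sum fun i _ => ?_
        refine div_le_div₀ (by positivity) ?_ (by positivity) hSlow
        exact mul_le_mul_of_nonneg_right (hw i) (abs_nonneg _)
    _ = ε / (N * δ) * ∑ i, |x0 i| := by
        have hsne : s ≠ 0 := ne_of_gt hspos
        rw [Finset.mul_sum]
        refine Finset.sum_congr rfl fun i _ => ?_
        field_simp

section Word
variable {M : ℕ} (K : Fin M → Matrix (Fin N) (Fin N) ℝ)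

lemma stmt14_entry_pos_word (hM : 1 ≤ M) (hKPD : ∀ k, Stmt14PD (K k)) (p : Fin M → ℝ)
    (hp : ∀ k, 0 < p k) (m : ℕ) : ∀ {i j : Fin N}, 0 < ((∑ k, p k • K k) ^ m) i j →
    ∃ l : List (Fin M), 0 < ((l.map K).prod) i j := by
  induction m with
  | zero =>
    intro i j h
    rw [pow_zero] at h
    by_cases hij : i = j
    · exact ⟨[], by simpa [hij] using h⟩
    · simp [Matrix.one_apply, hij] at h
  | succ m ih =>
    intro i j h
    set A := ∑ k, p k • K k with hA
    have hAnn : ∀ i j, 0 ≤ A i j := by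
      intro i j
      rw [hA]
      simp only [Finset.sum_apply, Matrix.sum_apply, Matrix.smul_apply, smul_eq_mul]
      exact Finset.sum_nonneg fun k _ => mul_nonneg (hp k).le ((hKPD k).1 i j)
    have hAPD : Stmt14PD A := by
      refine ⟨hAnn, fun i => ?_⟩
      rw [hA]
      simp only [Finset.sum_apply, Matrix.sum_apply, Matrix.smul_apply, smul_eq_mul]
      exact Finset.sum_pos (fun k _ => mul_pos (hp k) ((hKPD k).2 i))
        ⟨⟨0, hM⟩, Finset.mem_univ _⟩
    rw [pow_succ, Matrix.mul_apply] at h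
    obtain ⟨kk, -, hk⟩ : ∃ kk ∈ Finset.univ, 0 < (A ^ m) i kk * A kk j := by
      by_contra hcon
      push_neg at hcon
      exact absurd h (not_lt.2 (Finset.sum_nonpos fun k hk => hcon k hk))
    have h1 : 0 < (A ^ m) i kk := by
      rcases mul_pos_iff.1 hk with ⟨h1, _⟩ | ⟨h1, _⟩
      · exact h1
      · exact absurd h1 (not_lt.2 ((stmt14_PD_pow hAPD m).1 i kk))
    have h2 : 0 < A kk j := by
      rcases mul_pos_iff.1 hk with ⟨_, h2⟩ | ⟨_, h2⟩
      · exact h2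
      · exact absurd h2 (not_lt.2 (hAnn kk j))
    obtain ⟨t, ht⟩ : ∃ t, 0 < K t kk j := by
      rw [hA] at h2
      simp only [Finset.sum_apply, Matrix.sum_apply, Matrix.smul_apply, smul_eq_mul] at h2
      by_contra hcon
      push_neg at hcon
      refine absurd h2 (not_lt.2 (Finset.sum_nonpos fun t _ => ?_))
      exact mul_nonpos_of_nonneg_of_nonpos (hp t).le (hcon t)
    obtain ⟨l, hl⟩ := ih h1
    refine ⟨l ++ [t], ?_⟩
    rw [List.map_append, List.prod_append]
    simp only [List.map_cons, List.map_nil, List.prod_cons, List.prod_nil, mul_one]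
    calc (0:ℝ) < ((l.map K).prod) i kk * K t kk j := mul_pos hl ht
      _ ≤ _ := stmt14_mul_entry_ge (stmt14_PD_listProd (by
            intro B hB
            simp only [List.mem_map] at hB
            obtain ⟨k, -, rfl⟩ := hB
            exact hKPD k)).1 (hKPD t).1 i kk j

lemma stmt14_words_combine (hKPD : ∀ k, Stmt14PD (K k))
    (hpair : ∀ ij : Fin N × Fin N, ∃ l : List (Fin M), 0 < ((l.map K).prod) ij.1 ij.2) :
    ∀ L : List (Fin N × Fin N), ∃ l : List (Fin M),
      ∀ ij ∈ L, 0 < ((l.map K).prod) ij.1 ij.2 := by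
  have hPDl : ∀ l : List (Fin M), Stmt14PD ((l.map K).prod) := by
    intro l
    refine stmt14_PD_listProd ?_
    intro B hB
    simp only [List.mem_map] at hB
    obtain ⟨k, -, rfl⟩ := hB
    exact hKPD k
  intro L
  induction L with
  | nil => exact ⟨[], by simp⟩
  | cons a t ih =>
    obtain ⟨lt', hlt⟩ := ih
    obtain ⟨la, hla⟩ := hpair a
    refine ⟨la ++ lt', ?_⟩
    intro ij hij
    rw [List.map_append, List.prod_append]
    rcases List.mem_cons.1 hij with rfl | hmem
    · calc (0:ℝ) < ((la.map K).prod) ij.1 ij.2 * ((lt'.map K).prod) ij.2 ij.2 :=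
            mul_pos hla ((hPDl lt').2 ij.2)
        _ ≤ _ := stmt14_mul_entry_ge (hPDl la).1 (hPDl lt').1 ij.1 ij.2 ij.2
    · calc (0:ℝ) < ((la.map K).prod) ij.1 ij.1 * ((lt'.map K).prod) ij.1 ij.2 :=
            mul_pos ((hPDl la).2 ij.1) (hlt ij hmem)
        _ ≤ _ := stmt14_mul_entry_ge (hPDl la).1 (hPDl lt').1 ij.1 ij.1 ij.2

lemma stmt14_positive_word (hN : 1 ≤ N) (hM : 1 ≤ M) (hKPD : ∀ k, Stmt14PD (K k))
    (p : Fin M → ℝ) (hp : ∀ k, 0 < p k) (hprim : _root_.IsPrimitive (∑ k, p k • K k)) :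
    ∃ (L : ℕ) (w : ℕ → Fin M), 1 ≤ L ∧
      ∀ i j, 0 < (((List.range L).map fun u => K (w u)).prod) i j := by
  classical
  obtain ⟨m, -, hm⟩ := hprim
  have hpair : ∀ ij : Fin N × Fin N, ∃ l : List (Fin M), 0 < ((l.map K).prod) ij.1 ij.2 :=
    fun ij => stmt14_entry_pos_word K hM hKPD p hp m (hm ij.1 ij.2)
  obtain ⟨l, hl⟩ := stmt14_words_combine K hKPD hpair
    (Finset.univ : Finset (Fin N × Fin N)).toList
  have k0 : Fin M := ⟨0, hM⟩
  have hPDl : ∀ l' : List (Fin M), Stmt14PD ((l'.map K).prod) := by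
    intro l'
    refine stmt14_PD_listProd ?_
    intro B hB
    simp only [List.mem_map] at hB
    obtain ⟨k, -, rfl⟩ := hB
    exact hKPD k
  set l' : List (Fin M) := l ++ [k0] with hl'
  have hl'pos : ∀ i j, 0 < ((l'.map K).prod) i j := by
    intro i j
    rw [hl', List.map_append, List.prod_append]
    simp only [List.map_cons, List.map_nil, List.prod_cons, List.prod_nil, mul_one]
    calc (0:ℝ) < ((l.map K).prod) i j * K k0 j j :=
          mul_pos (hl (i, j) (Finset.mem_toList.2 (Finset.mem_univ _))) ((hKPD k0).2 j)
      _ ≤ _ := stmt14_mul_entry_ge (hPDl l).1 (hKPD k0).1 i j j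
  refine ⟨l'.length, fun u => l'.getD u k0, by simp [hl'], ?_⟩
  have : (List.range l'.length).map (fun u => K (l'.getD u k0)) = l'.map K := by
    apply List.ext_getElem
    · simp
    · intro u h1 h2
      simp only [List.getElem_map, List.getElem_range]
      rw [List.getD_eq_getElem]
  rw [this]
  exact hl'pos

end Word

section Prob
variable {Ω : Type*} [MeasurableSpace Ω] {M : ℕ}

lemma stmt14_block_inj {L n n' u u' : ℕ} (hu : u < L) (hu' : u' < L)
    (h : n * L + u = n' * L + u') : n = n' := by
  rcases lt_trichotomy n n' with h1 | h1 | h1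
  · exfalso
    have : (n + 1) * L ≤ n' * L := Nat.mul_le_mul_right _ h1
    have : n * L + u < n' * L + u' := by
      calc n * L + u < n * L + L := by omega
        _ = (n + 1) * L := by ring
        _ ≤ n' * L := this
        _ ≤ n' * L + u' := Nat.le_add_right _ _
    omega
  · exact h1
  · exfalso
    have : (n' + 1) * L ≤ n * L := Nat.mul_le_mul_right _ h1
    have : n' * L + u' < n * L + u := by
      calc n' * L + u' < n' * L + L := by omega
        _ = (n' + 1) * L := by ring
        _ ≤ n * L := this
        _ ≤ n * L + u := Nat.le_add_right _ _
    omega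

lemma stmt14_blocks_freq (μ : Measure Ω) [IsProbabilityMeasure μ]
    (p : Fin M → ℝ) (hp : ∀ k, 0 < p k)
    (ι : ℕ → Ω → Fin M) (hmeas : ∀ t, Measurable (ι t))
    (hiid : ∀ (s : Finset ℕ) (g : ℕ → Fin M),
      μ {ω | ∀ t ∈ s, ι t ω = g t} = ∏ t ∈ s, ENNReal.ofReal (p (g t)))
    (L : ℕ) (w : ℕ → Fin M) :
    ∀ᵐ ω ∂μ, ∀ m : ℕ, ∃ n, m ≤ n ∧ ∀ u, u < L → ι (n * L + u + 1) ω = w u := by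
  classical
  set A : ℕ → Set Ω := fun n => ⋂ (u : ℕ) (_ : u < L), (ι (n * L + u + 1)) ⁻¹' {w u}
    with hA
  have hmemA : ∀ n ω, ω ∈ A n ↔ ∀ u, u < L → ι (n * L + u + 1) ω = w u := by
    intro n ω
    simp [hA, Set.mem_iInter]
  have hAmeas : ∀ n, MeasurableSet (A n) := by
    intro n
    exact MeasurableSet.iInter fun u => MeasurableSet.iInter fun _ =>
      (hmeas _) (measurableSet_singleton _)
  set g : ℕ → Fin M := fun t => w ((t - 1) % L) with hgdef
  have hg : ∀ n u, u < L → g (n * L + u + 1) = w u := by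
    intro n u hu
    have h2 : (n * L + u + 1 - 1) % L = u := by
      rw [show n * L + u + 1 - 1 = u + n * L by omega, Nat.add_mul_mod_self_right,
        Nat.mod_eq_of_lt hu]
    simp only [hgdef, h2]
  set sb : ℕ → Finset ℕ := fun n => (Finset.range L).image fun u => n * L + u + 1 with hsb
  have hmemsb : ∀ n t, t ∈ sb n ↔ ∃ u, u < L ∧ t = n * L + u + 1 := by
    intro n t
    simp only [hsb, Finset.mem_image, Finset.mem_range]
    constructor
    · rintro ⟨u, hu, rfl⟩; exact ⟨u, hu, rfl⟩
    · rintro ⟨u, hu, rfl⟩; exact ⟨u, hu, rfl⟩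
  have hsetEq : ∀ F : Finset ℕ,
      (⋂ n ∈ F, A n) = {ω | ∀ t ∈ F.biUnion sb, ι t ω = g t} := by
    intro F
    ext ω
    simp only [Set.mem_iInter, Set.mem_setOf_eq, Finset.mem_biUnion]
    constructor
    · rintro h t ⟨n, hnF, htn⟩
      obtain ⟨u, hu, rfl⟩ := (hmemsb n t).1 htn
      rw [hg n u hu]
      exact (hmemA n ω).1 (h n hnF) u hu
    · intro h n hnF
      rw [hmemA]
      intro u hu
      rw [← hg n u hu]
      exact h _ ⟨n, hnF, (hmemsb n _).2 ⟨u, hu, rfl⟩⟩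
  have hprod_sb : ∀ n, (∏ t ∈ sb n, ENNReal.ofReal (p (g t)))
      = ∏ u ∈ Finset.range L, ENNReal.ofReal (p (w u)) := by
    intro n
    rw [hsb]
    rw [Finset.prod_image (by intro a _ b _ hab; simp only at hab; omega)]
    exact Finset.prod_congr rfl fun u hu => by
      rw [hg n u (Finset.mem_range.1 hu)]
  have hμA : ∀ n, μ (A n) = ∏ u ∈ Finset.range L, ENNReal.ofReal (p (w u)) := by
    intro n
    have h1 : A n = ⋂ n' ∈ ({n} : Finset ℕ), A n' := by simp
    rw [h1, hsetEq, hiid]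
    rw [Finset.singleton_biUnion]
    exact hprod_sb n
  have hdisj : ∀ (F : Finset ℕ), (↑F : Set ℕ).PairwiseDisjoint sb := by
    intro F n _ n' _ hne
    simp only [Function.onFun]
    rw [Finset.disjoint_left]
    intro t htn htn'
    obtain ⟨u, hu, rfl⟩ := (hmemsb n t).1 htn
    obtain ⟨u', hu', heq⟩ := (hmemsb n' _).1 htn'
    exact hne (stmt14_block_inj hu hu' (by omega))
  have hindep : ProbabilityTheory.iIndepSet A μ := by
    rw [ProbabilityTheory.iIndepSet_iff_meas_biInter hAmeas]
    intro F
    rw [hsetEq F, hiid, Finset.prod_biUnion (hdisj F)]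
    exact Finset.prod_congr rfl fun n _ => by rw [hprod_sb n, hμA n]
  have hcne : (∏ u ∈ Finset.range L, ENNReal.ofReal (p (w u))) ≠ 0 := by
    rw [Finset.prod_ne_zero_iff]
    intro u _
    simp [ENNReal.ofReal_eq_zero, not_le, hp (w u)]
  have htsum : (∑' n, μ (A n)) = (⊤ : ENNReal) := by
    simp only [hμA]
    exact ENNReal.tsum_const_eq_top_of_ne_zero hcne
  have hlim : μ (limsup A atTop) = 1 :=
    ProbabilityTheory.measure_limsup_eq_one hAmeas hindep htsum
  have hlimEq : limsup A atTop = ⋂ m, ⋃ n, ⋃ (_ : m ≤ n), A n := by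
    rw [limsup_eq_iInf_iSup_of_nat]
    simp only [Set.iInf_eq_iInter, Set.iSup_eq_iUnion]
  have hmeaslim : MeasurableSet (limsup A atTop) := by
    rw [hlimEq]
    exact MeasurableSet.iInter fun m => MeasurableSet.iUnion fun n =>
      MeasurableSet.iUnion fun _ => hAmeas n
  have hae : ∀ᵐ ω ∂μ, ω ∈ limsup A atTop := by
    rw [ae_iff]
    have : {ω | ¬ ω ∈ limsup A atTop} = (limsup A atTop)ᶜ := rfl
    rw [this, prob_compl_eq_zero_iff hmeaslim]
    exact hlim
  filter_upwards [hae] with ω hω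
  rw [hlimEq] at hω
  simp only [Set.mem_iInter, Set.mem_iUnion] at hω
  intro m
  obtain ⟨n, hn, hωn⟩ := hω m
  exact ⟨n, hn, (hmemA n ω).1 hωn⟩

end Prob
end AuxStmt14

theorem stmt14 {N M : ℕ} (hN : 1 ≤ N) (hM : 1 ≤ M)
    (K : Fin M → Matrix (Fin N) (Fin N) ℝ)
    (hK : ∀ k, RowStochastic (K k))
    (hdiag : ∀ k i, 0 < K k i i)
    (p : Fin M → ℝ) (hp : ∀ k, 0 < p k) (hpsum : ∑ k, p k = 1)
    -- `(K(t))_{t ≥ 1}` is an i.i.d. sequence of random matrices, `K(t) = K (ι t ω)`,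
    -- with `ℙ[K(t) = Kᵢ] = pᵢ`:
    {Ω : Type*} [MeasurableSpace Ω] (μ : Measure Ω) [IsProbabilityMeasure μ]
    (ι : ℕ → Ω → Fin M) (hmeas : ∀ t, Measurable (ι t))
    (hiid : ∀ (s : Finset ℕ) (g : ℕ → Fin M),
      μ {ω | ∀ t ∈ s, ι t ω = g t} = ∏ t ∈ s, ENNReal.ofReal (p (g t)))
    -- `P(t) = K(1) K(2) ⋯ K(t)`, `s(t)ᵀ = x(0)ᵀ P(t)`, `w(t)ᵀ = 𝟙ᵀ P(t)`, `x(t) = s(t)/w(t)`: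
    (P : ℕ → Ω → Matrix (Fin N) (Fin N) ℝ)
    (hP : ∀ t ω, P t ω = ((List.range t).map fun u => K (ι (u + 1) ω)).prod)
    (x : (Fin N → ℝ) → ℕ → Ω → Fin N → ℝ)
    (hx : ∀ x0 t ω j, x x0 t ω j = (∑ i, P t ω i j * x0 i) / (∑ i, P t ω i j)) :
    (∀ x0 : Fin N → ℝ,
        ∀ᵐ ω ∂μ, Tendsto (fun t => x x0 t ω) atTop
          (nhds fun _ => (N : ℝ)⁻¹ * ∑ i, x0 i)) ↔
      _root_.IsPrimitive (∑ k, p k • K k) := by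
  classical
  have hKPD : ∀ k, Stmt14PD (K k) := fun k => ⟨(hK k).1, hdiag k⟩
  have hNpos : (0:ℝ) < N := by exact_mod_cast hN
  constructor
  · -- convergence ⇒ primitive
    intro h
    by_contra hnp
    have hAPD : Stmt14PD (∑ k, p k • K k) := by
      constructor
      · intro i j
        simp only [Finset.sum_apply, Matrix.sum_apply, Matrix.smul_apply, smul_eq_mul]
        exact Finset.sum_nonneg fun k _ => mul_nonneg (hp k).le ((hK k).1 i j)
      · intro i
        simp only [Finset.sum_apply, Matrix.sum_apply, Matrix.smul_apply, smul_eq_mul]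
        exact Finset.sum_pos (fun k _ => mul_pos (hp k) (hdiag k i))
          ⟨⟨0, hM⟩, Finset.mem_univ _⟩
    obtain ⟨S, hSne, hSnuniv, hSclosed⟩ := stmt14_not_primitive_reducible hAPD hnp
    have hKzero : ∀ k, ∀ i ∈ S, ∀ j ∉ S, K k i j = 0 := by
      intro k i hi j hj
      have h0 := hSclosed i hi j hj
      simp only [Finset.sum_apply, Matrix.sum_apply, Matrix.smul_apply, smul_eq_mul] at h0
      have hnn : ∀ k' ∈ Finset.univ, (0:ℝ) ≤ p k' * K k' i j :=
        fun k' _ => mul_nonneg (hp k').le ((hK k').1 i j)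
      have hz := (Finset.sum_eq_zero_iff_of_nonneg hnn).1 h0 k (Finset.mem_univ k)
      exact (mul_eq_zero.1 hz).resolve_left (ne_of_gt (hp k))
    have hPzero : ∀ t ω, ∀ i ∈ S, ∀ j ∉ S, P t ω i j = 0 := by
      intro t ω
      rw [hP]
      apply stmt14_prod_block_zero
      intro B hB
      simp only [List.mem_map] at hB
      obtain ⟨u, -, rfl⟩ := hB
      exact ⟨(hK _).1, hKzero _⟩
    set x0 : Fin N → ℝ := fun i => if i ∈ S then 0 else 1 with hx0
    obtain ⟨j0, hj0⟩ : ∃ j, j ∉ S := by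
      by_contra hc
      push_neg at hc
      exact hSnuniv (Finset.eq_univ_iff_forall.2 hc)
    have hPPD : ∀ t ω, Stmt14PD (P t ω) := by
      intro t ω
      rw [hP]
      apply stmt14_PD_listProd
      intro B hB
      simp only [List.mem_map] at hB
      obtain ⟨u, -, rfl⟩ := hB
      exact hKPD _
    have hxval : ∀ t ω, x x0 t ω j0 = 1 := by
      intro t ω
      rw [hx]
      have hnum : ∑ i, P t ω i j0 * x0 i = ∑ i, P t ω i j0 := by
        refine Finset.sum_congr rfl fun i _ => ?_
        by_cases hi : i ∈ S
        · rw [hPzero t ω i hi j0 hj0]; ring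
        · simp [hx0, hi]
      rw [hnum]
      have hden : 0 < ∑ i, P t ω i j0 :=
        lt_of_lt_of_le ((hPPD t ω).2 j0)
          (Finset.single_le_sum (fun i _ => (hPPD t ω).1 i j0) (Finset.mem_univ j0))
      exact div_self (ne_of_gt hden)
    have hsum : ∑ i, x0 i = ((Finset.univ.filter (fun i => i ∉ S)).card : ℝ) := by
      rw [hx0]
      rw [Finset.sum_ite]
      simp
    have hcard : ((Finset.univ.filter (fun i => i ∉ S)).card : ℝ) < N := by
      have hss : Finset.univ.filter (fun i => i ∉ S) ⊂ Finset.univ := by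
        obtain ⟨s0, hs0⟩ := hSne
        refine Finset.ssubset_iff_of_subset (Finset.subset_univ _) |>.2 ⟨s0, Finset.mem_univ _, ?_⟩
        simp [hs0]
      have := Finset.card_lt_card hss
      rw [Finset.card_univ, Fintype.card_fin] at this
      exact_mod_cast this
    have havg : (N:ℝ)⁻¹ * ∑ i, x0 i < 1 := by
      rw [hsum]
      rw [inv_mul_lt_iff₀ hNpos, mul_one]
      exact hcard
    have hmo := h x0
    rw [ae_iff] at hmo
    have hall : {ω | ¬ Tendsto (fun t => x x0 t ω) atTop
        (nhds fun _ => (N:ℝ)⁻¹ * ∑ i, x0 i)} = Set.univ := by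
      apply Set.eq_univ_of_forall
      intro ω htend
      have htendj := (tendsto_pi_nhds.1 htend) j0
      have h1 : Tendsto (fun t => x x0 t ω j0) atTop (nhds 1) := by
        have : (fun t => x x0 t ω j0) = fun _ => (1:ℝ) := funext fun t => hxval t ω
        rw [this]
        exact tendsto_const_nhds
      have := tendsto_nhds_unique htendj h1
      linarith
    rw [hall] at hmo
    simp [measure_univ] at hmo
  · -- primitive ⇒ convergence
    intro hprim x0
    obtain ⟨L, w, hL, hQpos⟩ := stmt14_positive_word K hN hM hKPD p hp hprim
    set Q : Matrix (Fin N) (Fin N) ℝ := ((List.range L).map fun u => K (w u)).prod with hQdef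
    have hQRS : RowStochastic Q := by
      apply stmt14_RS_listProd
      intro B hB
      simp only [List.mem_map] at hB
      obtain ⟨u, -, rfl⟩ := hB
      exact hK _
    obtain ⟨δ, hδpos, hδle⟩ : ∃ δ : ℝ, 0 < δ ∧ ∀ i j, δ ≤ Q i j := by
      have hne : (Finset.univ : Finset (Fin N × Fin N)).Nonempty :=
        ⟨(⟨0, hN⟩, ⟨0, hN⟩), Finset.mem_univ _⟩
      obtain ⟨ab, -, habeq⟩ := Finset.exists_mem_eq_inf' hne (fun ij => Q ij.1 ij.2)
      refine ⟨Finset.univ.inf' hne fun ij => Q ij.1 ij.2, ?_, ?_⟩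
      · rw [habeq]; exact hQpos ab.1 ab.2
      · intro i j
        exact Finset.inf'_le (fun ij => Q ij.1 ij.2) (Finset.mem_univ (i, j))
    have hNδ1 : (N:ℝ) * δ ≤ 1 := by
      have i0 : Fin N := ⟨0, hN⟩
      calc (N:ℝ) * δ = ∑ _j : Fin N, δ := by
            simp [Finset.sum_const, Finset.card_univ, nsmul_eq_mul]
        _ ≤ ∑ j, Q i0 j := Finset.sum_le_sum fun j _ => hδle i0 j
        _ = 1 := hQRS.2 i0
    have hNδ0 : (0:ℝ) < N * δ := by positivity
    set θ : ℝ := 1 - N * δ with hθdef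
    have hθ0 : 0 ≤ θ := by rw [hθdef]; linarith
    have hθ1 : θ < 1 := by rw [hθdef]; linarith
    filter_upwards [stmt14_blocks_freq μ p hp ι hmeas hiid L w] with ω hocc
    -- deterministic part
    set F : ℕ → Matrix (Fin N) (Fin N) ℝ := fun u => K (ι (u + 1) ω) with hFdef
    set Pl : ℕ → Matrix (Fin N) (Fin N) ℝ := fun t => ((List.range t).map F).prod with hPldef
    have hPeq : ∀ t, P t ω = Pl t := fun t => hP t ω
    have hPlRS : ∀ t, RowStochastic (Pl t) := by
      intro t
      apply stmt14_RS_listProd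
      intro B hB
      simp only [hPldef, List.mem_map] at hB ⊢
      obtain ⟨u, -, rfl⟩ := hB
      exact hK _
    have hPlPD : ∀ t, Stmt14PD (Pl t) := by
      intro t
      apply stmt14_PD_listProd
      intro B hB
      simp only [hPldef, List.mem_map] at hB ⊢
      obtain ⟨u, -, rfl⟩ := hB
      exact hKPD _
    have hsplit : ∀ a b : ℕ,
        Pl (a + b) = Pl a * ((List.range b).map fun u => F (a + u)).prod := by
      intro a b
      show ((List.range (a + b)).map F).prod
        = ((List.range a).map F).prod * ((List.range b).map fun u => F (a + u)).prod
      rw [List.range_add, List.map_append, List.prod_append, List.map_map]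
      rfl
    set occ : ℕ → Prop := fun n => ∀ u, u < L → ι (n * L + u + 1) ω = w u with hoccdef
    have hblockQ : ∀ n, occ n →
        ((List.range L).map fun u => F (n * L + u)).prod = Q := by
      intro n hn
      rw [hQdef]
      congr 1
      apply List.map_congr_left
      intro u hu
      rw [List.mem_range] at hu
      show F (n * L + u) = K (w u)
      rw [hFdef]
      simp only []
      rw [hn u hu]
    set cnt : ℕ → ℕ := fun m => ((Finset.range m).filter occ).card with hcntdef
    have hcnt_succ_occ : ∀ m, occ m → cnt (m + 1) = cnt m + 1 := by
      intro m hm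
      rw [hcntdef]
      simp only [Finset.range_add_one, Finset.filter_insert, if_pos hm]
      rw [Finset.card_insert_of_notMem (by simp)]
    have hcnt_succ_nonocc : ∀ m, ¬ occ m → cnt (m + 1) = cnt m := by
      intro m hm
      rw [hcntdef]
      simp only [Finset.range_add_one, Finset.filter_insert, if_neg hm]
    -- the contraction estimate
    have hC : ∀ m, ∀ i i', ∑ j, |Pl (m * L) i j - Pl (m * L) i' j| ≤ 2 * θ ^ (cnt m) := by
      intro m
      induction m with
      | zero =>
        intro i i'
        have h0 : cnt 0 = 0 := by rw [hcntdef]; simp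
        rw [Nat.zero_mul, h0, pow_zero, mul_one]
        exact stmt14_RS_diff_le_two (hPlRS 0) i i'
      | succ m ih =>
        intro i i'
        have hmul : (m + 1) * L = m * L + L := by ring
        rw [hmul, hsplit (m * L) L]
        set Bm : Matrix (Fin N) (Fin N) ℝ := ((List.range L).map fun u => F (m * L + u)).prod
          with hBmdef
        have hBmRS : RowStochastic Bm := by
          apply stmt14_RS_listProd
          intro B hB
          simp only [List.mem_map] at hB
          obtain ⟨u, -, rfl⟩ := hB
          exact hK _
        set c : Fin N → ℝ := fun k => Pl (m * L) i k - Pl (m * L) i' k with hcdef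
        have hcsum : ∑ k, c k = 0 := by
          rw [hcdef]
          simp only []
          rw [Finset.sum_sub_distrib, (hPlRS (m * L)).2 i, (hPlRS (m * L)).2 i', sub_self]
        have hdiffeq : ∀ j, (Pl (m * L) * Bm) i j - (Pl (m * L) * Bm) i' j
            = ∑ k, c k * Bm k j := by
          intro j
          rw [Matrix.mul_apply, Matrix.mul_apply, ← Finset.sum_sub_distrib]
          refine Finset.sum_congr rfl fun k _ => ?_
          rw [hcdef]
          ring
        simp only [hdiffeq]
        by_cases hoccm : occ m
        · have hBmQ : Bm = Q := by rw [hBmdef]; exact hblockQ m hoccm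
          rw [hBmQ]
          calc ∑ j, |∑ k, c k * Q k j| ≤ (1 - N * δ) * ∑ k, |c k| :=
                stmt14_contract_delta hQRS hδle c hcsum
            _ = θ * ∑ k, |c k| := by rw [hθdef]
            _ ≤ θ * (2 * θ ^ cnt m) := mul_le_mul_of_nonneg_left (ih i i') hθ0
            _ = 2 * θ ^ (cnt m + 1) := by ring
            _ = 2 * θ ^ cnt (m + 1) := by rw [hcnt_succ_occ m hoccm]
        · calc ∑ j, |∑ k, c k * Bm k j| ≤ ∑ k, |c k| := stmt14_contract_one hBmRS c
            _ ≤ 2 * θ ^ cnt m := ih i i'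
            _ = 2 * θ ^ cnt (m + 1) := by rw [hcnt_succ_nonocc m hoccm]
    -- occurrences make cnt unbounded
    have hO : ∀ r, ∃ n, occ n ∧ r ≤ cnt (n + 1) := by
      intro r
      induction r with
      | zero =>
        obtain ⟨n, -, hn⟩ := hocc 0
        exact ⟨n, hn, Nat.zero_le _⟩
      | succ r ihr =>
        obtain ⟨n, hn, hcn⟩ := ihr
        obtain ⟨n', hn'ge, hn'⟩ := hocc (n + 1)
        refine ⟨n', hn', ?_⟩
        have hsub : insert n' ((Finset.range (n + 1)).filter occ)
            ⊆ (Finset.range (n' + 1)).filter occ := by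
          intro a ha
          rcases Finset.mem_insert.1 ha with rfl | ha'
          · exact Finset.mem_filter.2 ⟨Finset.mem_range.2 (by omega), hn'⟩
          · rw [Finset.mem_filter] at ha' ⊢
            exact ⟨Finset.mem_range.2 (by have := Finset.mem_range.1 ha'.1; omega), ha'.2⟩
        have hnotmem : n' ∉ (Finset.range (n + 1)).filter occ := by
          simp only [Finset.mem_filter, Finset.mem_range]
          intro hcontr
          omega
        have hcard := Finset.card_le_card hsub
        rw [Finset.card_insert_of_notMem hnotmem] at hcard
        have : cnt (n + 1) + 1 ≤ cnt (n' + 1) := by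
          rw [hcntdef]
          simpa using hcard
        omega
    -- conclusion
    rw [tendsto_pi_nhds]
    intro j
    rw [Metric.tendsto_atTop]
    intro ε hε
    set X : ℝ := ∑ i, |x0 i| with hXdef
    have hX0 : 0 ≤ X := Finset.sum_nonneg fun _ _ => abs_nonneg _
    obtain ⟨r, hr⟩ : ∃ r : ℕ, 2 * θ ^ r / ((N:ℝ) * δ) * X < ε := by
      have h2 : Tendsto (fun r : ℕ => θ ^ r) atTop (nhds 0) :=
        tendsto_pow_atTop_nhds_zero_of_lt_one hθ0 hθ1
      have h3 : Tendsto (fun r : ℕ => 2 * θ ^ r / ((N:ℝ) * δ) * X) atTop (nhds 0) := by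
        have := ((h2.const_mul 2).div_const ((N:ℝ) * δ)).mul_const X
        simpa using this
      exact (h3.eventually (gt_mem_nhds hε)).exists
    obtain ⟨n, hoccn, hcntn⟩ := hO r
    refine ⟨n * L + L, fun t ht => ?_⟩
    -- decompose
    have hA'eq : Pl (n * L + L) = Pl (n * L) * Q := by
      rw [hsplit (n * L) L, hblockQ n hoccn]
    have hA'RS : RowStochastic (Pl (n * L + L)) := hPlRS _
    have hA'δ : ∀ i k, δ ≤ Pl (n * L + L) i k := by
      intro i k
      rw [hA'eq, Matrix.mul_apply]
      calc δ = ∑ k', Pl (n * L) i k' * δ := by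
            rw [← Finset.sum_mul, (hPlRS (n * L)).2 i, one_mul]
        _ ≤ ∑ k', Pl (n * L) i k' * Q k' k := by
            refine Finset.sum_le_sum fun k' _ => ?_
            exact mul_le_mul_of_nonneg_left (hδle k' k) ((hPlPD (n * L)).1 i k')
    have hA'ε : ∀ i i', ∑ j', |Pl (n * L + L) i j' - Pl (n * L + L) i' j'| ≤ 2 * θ ^ r := by
      intro i i'
      have hmul : n * L + L = (n + 1) * L := by ring
      rw [hmul]
      calc ∑ j', |Pl ((n + 1) * L) i j' - Pl ((n + 1) * L) i' j'| ≤ 2 * θ ^ cnt (n + 1) :=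
            hC (n + 1) i i'
        _ ≤ 2 * θ ^ r := by
            have := pow_le_pow_of_le_one hθ0 hθ1.le hcntn
            linarith
    set B : Matrix (Fin N) (Fin N) ℝ :=
      ((List.range (t - (n * L + L))).map fun u => F (n * L + L + u)).prod with hBdef
    have hBPD : Stmt14PD B := by
      apply stmt14_PD_listProd
      intro B' hB'
      simp only [List.mem_map] at hB'
      obtain ⟨u, -, rfl⟩ := hB'
      exact hKPD _
    have hdecomp : P t ω = Pl (n * L + L) * B := by
      rw [hPeq t, show t = (n * L + L) + (t - (n * L + L)) by omega, hsplit]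
    rw [Real.dist_eq, hx, hdecomp]
    calc |(∑ i, (Pl (n * L + L) * B) i j * x0 i) / (∑ i, (Pl (n * L + L) * B) i j)
          - (N : ℝ)⁻¹ * ∑ i, x0 i|
        ≤ 2 * θ ^ r / ((N:ℝ) * δ) * X :=
          stmt14_key_estimate hN hδpos hA'δ hA'ε ⟨hBPD.1, fun j' => hBPD.2 j'⟩ x0 j
      _ < ε := hr
end

section
/- Let 𝒦 = {K₁, …, K_M} be a finite set of row-stochastic N×N real matrices, each with strictly positive diagonal entries, let p₁, …, p_M be strictly positive reals summing to 1 with Σᵢ pᵢKᵢ primitive, and let (K(t))_{t≥1} be an i.i.d. sequence of random matrices on a probability space with ℙ[K(t) = Kᵢ] = pᵢ for each i. Set P(t) = K(1)K(2)⋯K(t); given x(0) ∈ ℝᴺ define s(t)ᵀ = x(0)ᵀP(t), w(t)ᵀ = 𝟙ᵀP(t), x(t) = s(t)/w(t) (entrywise quotient, well defined since every entry of w(t) is strictly positive because the matrices in 𝒦 have positive diagonals), and x_ave = (1/N)𝟙ᵀx(0). Then the mean squared error converges to zero: 𝔼[ ‖x(t) − x_ave𝟙‖₂² ] → 0 as t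 → ∞, for every x(0) ∈ ℝᴺ. -/
open Matrix Finset MeasureTheory Filter

namespace Stmt15Aux

def GoodMat {N : ℕ} (A : Matrix (Fin N) (Fin N) ℝ) : Prop :=
  (∀ i j, 0 ≤ A i j) ∧ (∀ i, ∑ j, A i j = 1) ∧ (∀ i, 0 < A i i)

def Pos {N : ℕ} (P : Matrix (Fin N) (Fin N) ℝ) : Prop := ∀ i j, 0 < P i j

def Spread {N : ℕ} (P : Matrix (Fin N) (Fin N) ℝ) (i i' : Fin N) (d : ℝ) : Prop :=
  ∀ j j', P i j / P i' j - P i j' / P i' j' ≤ d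

section A
variable {N : ℕ}
lemma GoodMat.mul {A B : Matrix (Fin N) (Fin N) ℝ} (hA : GoodMat A) (hB : GoodMat B) :
    GoodMat (A * B) := by
  obtain ⟨hA0, hA1, hA2⟩ := hA
  obtain ⟨hB0, hB1, hB2⟩ := hB
  refine ⟨fun i j => ?_, fun i => ?_, fun i => ?_⟩
  · rw [Matrix.mul_apply]; exact Finset.sum_nonneg fun k _ => mul_nonneg (hA0 i k) (hB0 k j)
  · simp only [Matrix.mul_apply]
    rw [Finset.sum_comm]
    simp_rw [← Finset.mul_sum, hB1, mul_one]
    exact hA1 i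
  · have : A i i * B i i ≤ (A * B) i i := by
      rw [Matrix.mul_apply]
      exact Finset.single_le_sum (fun k _ => mul_nonneg (hA0 i k) (hB0 k i))
        (Finset.mem_univ i)
    exact lt_of_lt_of_le (mul_pos (hA2 i) (hB2 i)) this

lemma GoodMat.one : GoodMat (1 : Matrix (Fin N) (Fin N) ℝ) := by
  refine ⟨fun i j => ?_, fun i => ?_, fun i => ?_⟩
  · by_cases h : i = j <;> simp [Matrix.one_apply, h]
  · simp [Matrix.one_apply]
  · simp

lemma GoodMat.listProd {l : List (Matrix (Fin N) (Fin N) ℝ)} (h : ∀ A ∈ l, GoodMat A) :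
    GoodMat l.prod := by
  induction l with
  | nil => simpa using GoodMat.one
  | cons a t ih =>
    rw [List.prod_cons]
    exact (h a List.mem_cons_self).mul (ih fun A hA => h A (List.mem_cons_of_mem a hA))

lemma GoodMat.pow {A : Matrix (Fin N) (Fin N) ℝ} (hA : GoodMat A) (m : ℕ) : GoodMat (A ^ m) := by
  induction m with
  | zero => simpa using GoodMat.one
  | succ n ih => rw [pow_succ]; exact ih.mul hA

lemma entry_mul_le {A B : Matrix (Fin N) (Fin N) ℝ} (hA0 : ∀ i j, 0 ≤ A i j)
    (hB0 : ∀ i j, 0 ≤ B i j) (i k j : Fin N) : A i k * B k j ≤ (A * B) i j := by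
  rw [Matrix.mul_apply]
  exact Finset.single_le_sum (fun l _ => mul_nonneg (hA0 i l) (hB0 l j)) (Finset.mem_univ k)

variable {M : ℕ} {K : Fin M → Matrix (Fin N) (Fin N) ℝ}

lemma prodWord_good (hK : ∀ k, GoodMat (K k)) (l : List (Fin M)) :
    GoodMat ((l.map K).prod) := by
  apply GoodMat.listProd
  intro A hA
  obtain ⟨k, _, rfl⟩ := List.mem_map.1 hA
  exact hK k

lemma sum_pos_exists {α : Type*} [Fintype α] {f : α → ℝ} (h0 : ∀ a, 0 ≤ f a)
    (h : 0 < ∑ a, f a) : ∃ a, 0 < f a := by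
  by_contra hc
  push_neg at hc
  exact absurd (Finset.sum_nonpos fun a _ => hc a) (not_le.2 h)

lemma goodT (hK : ∀ k, GoodMat (K k)) {p : Fin M → ℝ} (hp : ∀ k, 0 < p k)
    (hpsum : ∑ k, p k = 1) (hM : 1 ≤ M) : GoodMat (∑ k, p k • K k) := by
  refine ⟨fun i j => ?_, fun i => ?_, fun i => ?_⟩
  · rw [Matrix.sum_apply]
    exact Finset.sum_nonneg fun k _ =>
      (by simpa using mul_nonneg (hp k).le ((hK k).1 i j) : (0:ℝ) ≤ (p k • K k) i j)
  · simp only [Matrix.sum_apply, Matrix.smul_apply, smul_eq_mul]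
    rw [Finset.sum_comm]
    simp_rw [← Finset.mul_sum, (hK _).2.1, mul_one]
    exact hpsum
  · rw [Matrix.sum_apply]
    refine lt_of_lt_of_le (mul_pos (hp ⟨0, hM⟩) ((hK ⟨0, hM⟩).2.2 i)) ?_
    refine Finset.single_le_sum (f := fun k => (p k • K k) i i) (fun k _ => ?_) (Finset.mem_univ (⟨0, hM⟩ : Fin M))
    simpa using mul_nonneg (hp k).le ((hK k).1 i i)

lemma word_of_pow_pos (hK : ∀ k, GoodMat (K k)) {p : Fin M → ℝ} (hp : ∀ k, 0 < p k)
    (hpsum : ∑ k, p k = 1) (hM : 1 ≤ M) :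
    ∀ (m : ℕ) (i j : Fin N), 0 < ((∑ k, p k • K k) ^ m) i j →
      ∃ l : List (Fin M), 0 < ((l.map K).prod) i j := by
  intro m
  induction m with
  | zero => intro i j h; exact ⟨[], by simpa using h⟩
  | succ n ih =>
    intro i j h
    rw [pow_succ'] at h
    set T := ∑ k, p k • K k with hT
    have hTg : GoodMat T := goodT hK hp hpsum hM
    rw [Matrix.mul_apply] at h
    obtain ⟨k, hk⟩ := sum_pos_exists (fun k =>
      mul_nonneg (hTg.1 i k) ((hTg.pow n).1 k j)) h
    have hTn := (hTg.pow n).1 k j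
    have hTik := hTg.1 i k
    have h1 : 0 < T i k := by nlinarith
    have h2 : 0 < (T ^ n) k j := by nlinarith
    have h1' : 0 < ∑ a, (p a • K a) i k := by rw [← Matrix.sum_apply]; exact h1
    obtain ⟨a, ha⟩ := sum_pos_exists (f := fun a => (p a • K a) i k)
      (fun a => by simpa using mul_nonneg (hp a).le ((hK a).1 i k)) h1'
    have haK : 0 < K a i k := by
      have : (p a • K a) i k = p a * K a i k := rfl
      rw [this] at ha
      nlinarith [hp a]
    obtain ⟨l, hl⟩ := ih k j h2
    refine ⟨a :: l, ?_⟩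
    rw [List.map_cons, List.prod_cons]
    exact lt_of_lt_of_le (mul_pos haK hl)
      (entry_mul_le ((hK a).1) ((prodWord_good hK l).1) i k j)

end A

section B
variable {N M : ℕ} {K : Fin M → Matrix (Fin N) (Fin N) ℝ}

lemma exists_allpos (hM : 1 ≤ M) (hK : ∀ k, GoodMat (K k))
    {p : Fin M → ℝ} (hp : ∀ k, 0 < p k) (hpsum : ∑ k, p k = 1)
    (hprim : _root_.IsPrimitive (∑ k, p k • K k)) :
    ∃ l : List (Fin M), 1 ≤ l.length ∧ ∀ i j, 0 < ((l.map K).prod) i j := by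
  obtain ⟨m, _, hpos⟩ := hprim
  have key : ∀ S : Finset (Fin N × Fin N), ∃ l : List (Fin M),
      ∀ pr ∈ S, 0 < ((l.map K).prod) pr.1 pr.2 := by
    intro S
    induction S using Finset.induction_on with
    | empty => exact ⟨[], by simp⟩
    | @insert a S hnotmem ih =>
      obtain ⟨l0, hl0⟩ := ih
      obtain ⟨l1, hl1⟩ := word_of_pow_pos hK hp hpsum hM m a.1 a.2 (hpos a.1 a.2)
      refine ⟨l0 ++ l1, fun pr hpr => ?_⟩
      rw [List.map_append, List.prod_append]
      rcases Finset.mem_insert.1 hpr with h | h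
      · subst h
        exact lt_of_lt_of_le (mul_pos ((prodWord_good hK l0).2.2 pr.1) hl1)
          (entry_mul_le ((prodWord_good hK l0).1) ((prodWord_good hK l1).1) pr.1 pr.1 pr.2)
      · exact lt_of_lt_of_le (mul_pos (hl0 pr h) ((prodWord_good hK l1).2.2 pr.2))
          (entry_mul_le ((prodWord_good hK l0).1) ((prodWord_good hK l1).1) pr.1 pr.2 pr.2)
  obtain ⟨l, hl⟩ := key Finset.univ
  refine ⟨l ++ [⟨0, hM⟩], by simp, fun i j => ?_⟩
  rw [List.map_append, List.prod_append]
  refine lt_of_lt_of_le (mul_pos (hl (i, j) (Finset.mem_univ _)) ?_)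
    (entry_mul_le ((prodWord_good hK l).1) ((prodWord_good hK [⟨0, hM⟩]).1) i j j)
  show 0 < (([⟨0, hM⟩] : List (Fin M)).map K).prod j j
  exact (prodWord_good hK _).2.2 j


end B

section C
variable {N : ℕ}

lemma wavg_sub_wavg_le {r a b : Fin N → ℝ} {d : ℝ}
    (ha : ∀ k, 0 ≤ a k) (hb : ∀ k, 0 ≤ b k) (hsa : 0 < ∑ k, a k) (hsb : 0 < ∑ k, b k)
    (hr : ∀ k l, r k - r l ≤ d) :
    (∑ k, r k * a k) / (∑ k, a k) - (∑ k, r k * b k) / (∑ k, b k) ≤ d := by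
  rw [div_sub_div _ _ (ne_of_gt hsa) (ne_of_gt hsb), div_le_iff₀ (mul_pos hsa hsb)]
  have key : (∑ k, r k * a k) * (∑ l, b l) - (∑ l, r l * b l) * (∑ k, a k)
      ≤ ∑ k, ∑ l, d * (a k * b l) := by
    rw [Finset.sum_mul_sum, Finset.sum_mul_sum]
    rw [Finset.sum_comm (f := fun l k => r l * b l * a k)]
    rw [← Finset.sum_sub_distrib]
    simp_rw [← Finset.sum_sub_distrib]
    refine Finset.sum_le_sum fun k _ => Finset.sum_le_sum fun l _ => ?_
    have h1 := hr k l
    have h2 : 0 ≤ a k * b l := mul_nonneg (ha k) (hb l)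
    nlinarith
  calc (∑ k, r k * a k) * (∑ k, b k) - (∑ k, a k) * (∑ k, r k * b k)
      = (∑ k, r k * a k) * (∑ l, b l) - (∑ l, r l * b l) * (∑ k, a k) := by ring
    _ ≤ ∑ k, ∑ l, d * (a k * b l) := key
    _ = d * ((∑ k, a k) * (∑ l, b l)) := by
        rw [Finset.sum_mul_sum (f := a) (g := b)]
        rw [Finset.mul_sum]
        exact Finset.sum_congr rfl fun k _ => by rw [Finset.mul_sum]

lemma wavg_le_eps {r v B : Fin N → ℝ} {ε Mx : ℝ}
    (hv : ∀ k, 0 < v k) (hB1 : ∀ k, B k ≤ 1) (hBe : ∀ k, ε ≤ B k) (hε : 0 < ε)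
    (hM : ∀ k, r k ≤ Mx) (hN : 0 < N) :
    (∑ k, r k * (v k * B k)) / (∑ k, v k * B k)
      ≤ (1 - ε) * Mx + ε * ((∑ k, r k * v k) / (∑ k, v k)) := by
  have hS : 0 < ∑ k, v k :=
    Finset.sum_pos (fun k _ => hv k) (Finset.univ_nonempty_iff.2 (Fin.pos_iff_nonempty.1 hN))
  have hA : 0 < ∑ k, v k * B k := by
    refine Finset.sum_pos (fun k _ => mul_pos (hv k) (lt_of_lt_of_le hε (hBe k))) ?_
    exact Finset.univ_nonempty_iff.2 (Fin.pos_iff_nonempty.1 hN)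
  have hAS : (∑ k, v k * B k) ≤ ∑ k, v k :=
    Finset.sum_le_sum fun k _ => by nlinarith [hv k, hB1 k]
  have hYS : (∑ k, r k * v k) ≤ Mx * ∑ k, v k := by
    rw [Finset.mul_sum]
    exact Finset.sum_le_sum fun k _ => by nlinarith [hv k, hM k]
  have fact1 : (∑ k, r k * (v k * B k))
      ≤ Mx * (∑ k, v k * B k) - ε * (Mx * (∑ k, v k) - ∑ k, r k * v k) := by
    have : ∀ k, r k * (v k * B k) ≤ Mx * (v k * B k) - ε * (Mx * v k - r k * v k) := by
      intro k
      have h1 : 0 ≤ (Mx - r k) * v k := mul_nonneg (by linarith [hM k]) (hv k).le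
      nlinarith [hBe k, hv k, hM k]
    calc (∑ k, r k * (v k * B k)) ≤ ∑ k, (Mx * (v k * B k) - ε * (Mx * v k - r k * v k)) :=
          Finset.sum_le_sum fun k _ => this k
      _ = Mx * (∑ k, v k * B k) - ε * (Mx * (∑ k, v k) - ∑ k, r k * v k) := by
          rw [Finset.sum_sub_distrib, ← Finset.mul_sum, ← Finset.mul_sum]
          congr 1
          rw [Finset.sum_sub_distrib, ← Finset.mul_sum]
  set S := ∑ k, v k
  set A := ∑ k, v k * B k
  set X := ∑ k, r k * (v k * B k)
  set Y := ∑ k, r k * v k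
  rw [div_le_iff₀ hA]
  have hYeq : Y / S * S = Y := div_mul_cancel₀ Y (ne_of_gt hS)
  nlinarith [mul_le_mul_of_nonneg_left hAS (le_of_lt hε),
    mul_nonneg (le_of_lt hε) (mul_nonneg (sub_nonneg.2 (by nlinarith : Y / S ≤ Mx)) (sub_nonneg.2 hAS))]


lemma entry_mul_le' {A B : Matrix (Fin N) (Fin N) ℝ} (hA0 : ∀ i j, 0 ≤ A i j)
    (hB0 : ∀ i j, 0 ≤ B i j) (i k j : Fin N) : A i k * B k j ≤ (A * B) i j := by
  rw [Matrix.mul_apply]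
  exact Finset.single_le_sum (fun l _ => mul_nonneg (hA0 i l) (hB0 l j)) (Finset.mem_univ k)

lemma mul_ratio_eq {P Q : Matrix (Fin N) (Fin N) ℝ} {i i' : Fin N}
    (hP : ∀ k, 0 < P i' k) (jj : Fin N) :
    (P * Q) i jj = ∑ k, (P i k / P i' k) * (P i' k * Q k jj) := by
  rw [Matrix.mul_apply]
  refine Finset.sum_congr rfl fun k _ => ?_
  rw [div_mul_eq_mul_div, mul_comm (P i' k) (Q k jj), ← mul_assoc, mul_div_assoc,
    div_self (ne_of_gt (hP k)), mul_one]

lemma mul_row_eq {P Q : Matrix (Fin N) (Fin N) ℝ} {i' : Fin N} (jj : Fin N) :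
    (P * Q) i' jj = ∑ k, P i' k * Q k jj := Matrix.mul_apply

lemma spread_mul_rs {P Q : Matrix (Fin N) (Fin N) ℝ} {i i' : Fin N} {d : ℝ}
    (hP : Pos P) (hs : Spread P i i' d)
    (hQ0 : ∀ k j, 0 ≤ Q k j) (hQd : ∀ j, 0 < Q j j) :
    Pos (P * Q) ∧ Spread (P * Q) i i' d := by
  have hpos : Pos (P * Q) := fun a b =>
    lt_of_lt_of_le (mul_pos (hP a b) (hQd b)) (entry_mul_le' (fun u v => (hP u v).le) hQ0 a b b)
  refine ⟨hpos, fun j j' => ?_⟩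
  have hsum : ∀ jj : Fin N, 0 < ∑ k, P i' k * Q k jj := fun jj => by
    rw [← mul_row_eq jj]; exact hpos i' jj
  rw [mul_ratio_eq (fun k => hP i' k) j, mul_ratio_eq (fun k => hP i' k) j',
    mul_row_eq j, mul_row_eq j']
  exact wavg_sub_wavg_le (fun k => mul_nonneg (hP i' k).le (hQ0 k j))
    (fun k => mul_nonneg (hP i' k).le (hQ0 k j')) (hsum j) (hsum j') (fun k l => hs k l)

lemma spread_mul_block (hN : 0 < N) {P B : Matrix (Fin N) (Fin N) ℝ} {i i' : Fin N} {d ε : ℝ}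
    (hP : Pos P) (hs : Spread P i i' d) (hε : 0 < ε) (hε1 : ε ≤ 1)
    (hBe : ∀ k j, ε ≤ B k j) (hB1 : ∀ k j, B k j ≤ 1) :
    Spread (P * B) i i' ((1 - ε) * d) := by
  intro j j'
  have hne : (Finset.univ : Finset (Fin N)).Nonempty :=
    Finset.univ_nonempty_iff.2 (Fin.pos_iff_nonempty.1 hN)
  set r : Fin N → ℝ := fun k => P i k / P i' k with hr
  obtain ⟨k0, _, hk0⟩ := Finset.exists_mem_eq_sup' hne r
  obtain ⟨l0, _, hl0⟩ := Finset.exists_mem_eq_inf' hne r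
  set Mx := Finset.univ.sup' hne r
  set mn := Finset.univ.inf' hne r
  have hMx : ∀ k, r k ≤ Mx := fun k => Finset.le_sup' r (Finset.mem_univ k)
  have hmn : ∀ k, mn ≤ r k := fun k => Finset.inf'_le r (Finset.mem_univ k)
  have hMm : Mx - mn ≤ d := by rw [hk0, hl0]; exact hs k0 l0
  have hup : (P * B) i j / (P * B) i' j
      ≤ (1 - ε) * Mx + ε * ((∑ k, r k * P i' k) / (∑ k, P i' k)) := by
    rw [mul_ratio_eq (fun k => hP i' k) j, mul_row_eq j]
    exact wavg_le_eps (fun k => hP i' k) (fun k => hB1 k j) (fun k => hBe k j) hε hMx hN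
  have hlo : (1 - ε) * mn + ε * ((∑ k, r k * P i' k) / (∑ k, P i' k))
      ≤ (P * B) i j' / (P * B) i' j' := by
    have := wavg_le_eps (r := fun k => -r k) (v := fun k => P i' k) (B := fun k => B k j')
      (fun k => hP i' k) (fun k => hB1 k j') (fun k => hBe k j') hε
      (fun k => neg_le_neg (hmn k)) hN
    simp only [neg_mul, Finset.sum_neg_distrib, neg_div] at this
    rw [mul_ratio_eq (fun k => hP i' k) j', mul_row_eq j']
    linarith
  have hRmid := hup
  linarith [hup, hlo, mul_le_mul_of_nonneg_left hMm (by linarith : (0:ℝ) ≤ 1 - ε)]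

lemma spread_init (hN : 0 < N) {U B : Matrix (Fin N) (Fin N) ℝ} {ε : ℝ}
    (hU0 : ∀ i j, 0 ≤ U i j) (hU1 : ∀ i, ∑ j, U i j = 1)
    (hε : 0 < ε) (hBe : ∀ k j, ε ≤ B k j) (hB1 : ∀ k j, B k j ≤ 1) :
    Pos (U * B) ∧ (∀ a b, (U * B) a b ≤ 1) ∧ ∀ i i', Spread (U * B) i i' ε⁻¹ := by
  have hlow : ∀ a b, ε ≤ (U * B) a b := by
    intro a b
    rw [Matrix.mul_apply]
    calc ε = ∑ k, U a k * ε := by rw [← Finset.sum_mul, hU1 a, one_mul]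
      _ ≤ ∑ k, U a k * B k b :=
        Finset.sum_le_sum fun k _ => mul_le_mul_of_nonneg_left (hBe k b) (hU0 a k)
  have hhigh : ∀ a b, (U * B) a b ≤ 1 := by
    intro a b
    rw [Matrix.mul_apply]
    calc (∑ k, U a k * B k b) ≤ ∑ k, U a k * 1 :=
        Finset.sum_le_sum fun k _ => mul_le_mul_of_nonneg_left (hB1 k b) (hU0 a k)
      _ = 1 := by simp [hU1 a]
  refine ⟨fun a b => lt_of_lt_of_le hε (hlow a b), hhigh, fun i i' j j' => ?_⟩
  have h1 : (U * B) i j / (U * B) i' j ≤ 1 / ε :=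
    div_le_div₀ (by norm_num) (hhigh i j) hε (hlow i' j)
  have h2 : 0 ≤ (U * B) i j' / (U * B) i' j' :=
    div_nonneg (le_trans hε.le (hlow i j')) (le_trans hε.le (hlow i' j'))
  rw [one_div] at h1
  linarith


lemma entry_abs_le {P : Matrix (Fin N) (Fin N) ℝ} {d : ℝ} {i i' : Fin N}
    (hrs : ∀ a, ∑ j, P a j = 1) (hpos : Pos P) (hsp : Spread P i i' d) (j : Fin N) :
    |P i j - P i' j| ≤ d * P i' j := by
  have hsum1 : ∑ l, (P i l / P i' l) * P i' l = 1 := by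
    rw [← hrs i]
    exact Finset.sum_congr rfl fun l _ => div_mul_cancel₀ _ (ne_of_gt (hpos i' l))
  have hsum2 : ∑ l, (P i j / P i' j) * P i' l = P i j / P i' j := by
    rw [← Finset.mul_sum, hrs i', mul_one]
  have h1 : P i j / P i' j - 1 ≤ d := by
    have : ∑ l, (P i j / P i' j - P i l / P i' l) * P i' l ≤ ∑ l, d * P i' l :=
      Finset.sum_le_sum fun l _ =>
        mul_le_mul_of_nonneg_right (hsp j l) (hpos i' l).le
    rw [← Finset.mul_sum, hrs i', mul_one] at this
    calc P i j / P i' j - 1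
        = ∑ l, (P i j / P i' j - P i l / P i' l) * P i' l := by
          simp_rw [sub_mul]
          rw [Finset.sum_sub_distrib, hsum1, hsum2]
      _ ≤ d := this
  have h2 : 1 - P i j / P i' j ≤ d := by
    have : ∑ l, (P i l / P i' l - P i j / P i' j) * P i' l ≤ ∑ l, d * P i' l :=
      Finset.sum_le_sum fun l _ =>
        mul_le_mul_of_nonneg_right (hsp l j) (hpos i' l).le
    rw [← Finset.mul_sum, hrs i', mul_one] at this
    calc 1 - P i j / P i' j
        = ∑ l, (P i l / P i' l - P i j / P i' j) * P i' l := by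
          simp_rw [sub_mul]
          rw [Finset.sum_sub_distrib, hsum1, hsum2]
      _ ≤ d := this
  have heq : P i j - P i' j = (P i j / P i' j - 1) * P i' j := by
    rw [sub_mul, div_mul_cancel₀ _ (ne_of_gt (hpos i' j)), one_mul]
  rw [heq, abs_mul, abs_of_pos (hpos i' j)]
  exact mul_le_mul_of_nonneg_right (abs_le.2 ⟨by linarith, h1⟩) (hpos i' j).le

lemma xbound_of_spread (hN : 0 < N) {P : Matrix (Fin N) (Fin N) ℝ} {d : ℝ} (x0 : Fin N → ℝ)
    (hrs : ∀ a, ∑ j, P a j = 1) (hpos : Pos P)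
    (hsp : ∀ i i', Spread P i i' d) (hd : 0 ≤ d) :
    ∑ j, ((∑ i, P i j * x0 i) / (∑ i, P i j) - (N : ℝ)⁻¹ * ∑ i, x0 i) ^ 2
      ≤ (∑ i, |x0 i|) ^ 2 * d ^ 2 := by
  have hNR : (0 : ℝ) < N := by exact_mod_cast hN
  have hN1 : (1 : ℝ) ≤ N := by exact_mod_cast hN
  set C := ∑ i, |x0 i| with hC
  have hC0 : 0 ≤ C := Finset.sum_nonneg fun i _ => abs_nonneg _
  have key : ∀ j : Fin N,
      |(∑ i, P i j * x0 i) / (∑ i, P i j) - (N : ℝ)⁻¹ * ∑ i, x0 i| ≤ d / N * C := by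
    intro j
    set w := ∑ i, P i j with hw
    have hwpos : 0 < w := Finset.sum_pos (fun i _ => hpos i j)
      (Finset.univ_nonempty_iff.2 (Fin.pos_iff_nonempty.1 hN))
    have hib : ∀ i : Fin N, |P i j / w - (N : ℝ)⁻¹| ≤ d / N := by
      intro i
      have hNP : (N : ℝ) * P i j - w = ∑ i', (P i j - P i' j) := by
        rw [Finset.sum_sub_distrib]
        simp [hw, Finset.card_univ, mul_comm]
      have habs : |(N : ℝ) * P i j - w| ≤ d * w := by
        rw [hNP]
        calc |∑ i', (P i j - P i' j)| ≤ ∑ i', |P i j - P i' j| :=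
              Finset.abs_sum_le_sum_abs _ _
          _ ≤ ∑ i', d * P i' j :=
              Finset.sum_le_sum fun i' _ => entry_abs_le hrs hpos (hsp i i') j
          _ = d * w := by rw [← Finset.mul_sum]
      have heq : P i j / w - (N : ℝ)⁻¹ = ((N : ℝ) * P i j - w) / ((N : ℝ) * w) := by
        field_simp
      rw [heq, abs_div, abs_of_pos (mul_pos hNR hwpos)]
      rw [div_le_div_iff₀ (mul_pos hNR hwpos) hNR]
      calc |(N : ℝ) * P i j - w| * N ≤ d * w * N :=
            mul_le_mul_of_nonneg_right habs (by positivity)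
        _ = d * (N * w) := by ring
    have hsplit : (∑ i, P i j * x0 i) / (∑ i, P i j) - (N : ℝ)⁻¹ * ∑ i, x0 i
        = ∑ i, (P i j / w - (N : ℝ)⁻¹) * x0 i := by
      simp_rw [sub_mul]
      rw [Finset.sum_sub_distrib, Finset.sum_div]
      congr 1
      · exact Finset.sum_congr rfl fun i _ => (div_mul_eq_mul_div _ _ _).symm
      · rw [Finset.mul_sum]
    rw [hsplit]
    calc |∑ i, (P i j / w - (N : ℝ)⁻¹) * x0 i| ≤ ∑ i, |(P i j / w - (N : ℝ)⁻¹) * x0 i| :=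
          Finset.abs_sum_le_sum_abs _ _
      _ ≤ ∑ i, (d / N) * |x0 i| := by
          refine Finset.sum_le_sum fun i _ => ?_
          rw [abs_mul]
          exact mul_le_mul_of_nonneg_right (hib i) (abs_nonneg _)
      _ = d / N * C := by rw [← Finset.mul_sum]
  calc ∑ j, ((∑ i, P i j * x0 i) / (∑ i, P i j) - (N : ℝ)⁻¹ * ∑ i, x0 i) ^ 2
      ≤ ∑ _j : Fin N, (d / N * C) ^ 2 := by
        refine Finset.sum_le_sum fun j _ => ?_
        have := key j
        exact sq_le_sq' (by cases abs_le.1 this; linarith) (by cases abs_le.1 this; linarith)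
    _ = (N : ℝ) * (d / N * C) ^ 2 := by
        rw [Finset.sum_const, Finset.card_univ, Fintype.card_fin, nsmul_eq_mul]
    _ ≤ C ^ 2 * d ^ 2 := by
        have h2 : (d / (N:ℝ) * C) ^ 2 = (d * C) ^ 2 / (N:ℝ) ^ 2 := by
          field_simp
        have h3 : (N:ℝ) * ((d * C) ^ 2 / (N:ℝ) ^ 2) = (d * C) ^ 2 / (N:ℝ) := by
          field_simp
        rw [h2, h3]
        calc (d * C) ^ 2 / (N:ℝ) ≤ (d * C) ^ 2 := div_le_self (by positivity) hN1
          _ = C ^ 2 * d ^ 2 := by ring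

lemma xbound_triv (hN : 0 < N) {P : Matrix (Fin N) (Fin N) ℝ} (x0 : Fin N → ℝ)
    (h0 : ∀ i j, 0 ≤ P i j) (hw : ∀ j, 0 < ∑ i, P i j) :
    ∑ j, ((∑ i, P i j * x0 i) / (∑ i, P i j) - (N : ℝ)⁻¹ * ∑ i, x0 i) ^ 2
      ≤ (N : ℝ) * (2 * ∑ i, |x0 i|) ^ 2 := by
  have hN1 : (1 : ℝ) ≤ N := by exact_mod_cast hN
  set C := ∑ i, |x0 i| with hC
  have hC0 : 0 ≤ C := Finset.sum_nonneg fun i _ => abs_nonneg _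
  have key : ∀ j, |(∑ i, P i j * x0 i) / (∑ i, P i j) - (N : ℝ)⁻¹ * ∑ i, x0 i| ≤ 2 * C := by
    intro j
    have h1 : |(∑ i, P i j * x0 i) / (∑ i, P i j)| ≤ C := by
      rw [abs_div, abs_of_pos (hw j), div_le_iff₀ (hw j)]
      calc |∑ i, P i j * x0 i| ≤ ∑ i, |P i j * x0 i| := Finset.abs_sum_le_sum_abs _ _
        _ = ∑ i, P i j * |x0 i| := Finset.sum_congr rfl fun i _ => by
            rw [abs_mul, abs_of_nonneg (h0 i j)]
        _ ≤ ∑ i, (∑ i', P i' j) * |x0 i| := Finset.sum_le_sum fun i _ =>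
            mul_le_mul_of_nonneg_right
              (Finset.single_le_sum (fun i' _ => h0 i' j) (Finset.mem_univ i)) (abs_nonneg _)
        _ = C * (∑ i, P i j) := by rw [← Finset.mul_sum]; ring
    have h2 : |(N : ℝ)⁻¹ * ∑ i, x0 i| ≤ C := by
      rw [abs_mul]
      calc |(N:ℝ)⁻¹| * |∑ i, x0 i| ≤ 1 * C := by
            refine mul_le_mul ?_ ?_ (abs_nonneg _) (by norm_num)
            · rw [abs_of_nonneg (by positivity)]
              exact inv_le_one_of_one_le₀ hN1
            · exact le_trans (Finset.abs_sum_le_sum_abs _ _) le_rfl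
        _ = C := one_mul C
    calc |(∑ i, P i j * x0 i) / (∑ i, P i j) - (N : ℝ)⁻¹ * ∑ i, x0 i|
        ≤ |(∑ i, P i j * x0 i) / (∑ i, P i j)| + |(N : ℝ)⁻¹ * ∑ i, x0 i| := abs_sub _ _
      _ ≤ 2 * C := by linarith
  calc ∑ j, ((∑ i, P i j * x0 i) / (∑ i, P i j) - (N : ℝ)⁻¹ * ∑ i, x0 i) ^ 2
      ≤ ∑ _j : Fin N, (2 * C) ^ 2 := by
        refine Finset.sum_le_sum fun j _ => ?_
        have := key j
        exact sq_le_sq' (by cases abs_le.1 this; linarith) (by cases abs_le.1 this; linarith)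
    _ = (N : ℝ) * (2 * C) ^ 2 := by
        rw [Finset.sum_const, Finset.card_univ, Fintype.card_fin, nsmul_eq_mul]


lemma pos_mul_rs {P Q : Matrix (Fin N) (Fin N) ℝ} (hP : Pos P)
    (hQ0 : ∀ k j, 0 ≤ Q k j) (hQd : ∀ j, 0 < Q j j) : Pos (P * Q) := by
  intro a b
  have : P a b * Q b b ≤ (P * Q) a b := by
    rw [Matrix.mul_apply]
    exact Finset.single_le_sum (fun l _ => mul_nonneg (hP a l).le (hQ0 l b)) (Finset.mem_univ b)
  exact lt_of_lt_of_le (mul_pos (hP a b) (hQd b)) this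

lemma goodmat_entry_le_one {A : Matrix (Fin N) (Fin N) ℝ} (hA : GoodMat A) (i j : Fin N) :
    A i j ≤ 1 := by
  rw [← hA.2.1 i]
  exact Finset.single_le_sum (fun l _ => hA.1 i l) (Finset.mem_univ j)

lemma tail_lemma {d : ℝ} :
    ∀ (l : List (Matrix (Fin N) (Fin N) ℝ)), (∀ A ∈ l, GoodMat A) →
    ∀ {P : Matrix (Fin N) (Fin N) ℝ}, Pos P → (∀ i i', Spread P i i' d) →
    Pos (P * l.prod) ∧ ∀ i i', Spread (P * l.prod) i i' d := by
  intro l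
  induction l with
  | nil => intro _ P hP hsp; simpa using ⟨hP, hsp⟩
  | cons a t ih =>
    intro hl P hP hsp
    rw [List.prod_cons, ← mul_assoc]
    have ha := hl a List.mem_cons_self
    have h1 : Pos (P * a) := pos_mul_rs hP ha.1 ha.2.2
    have h2 : ∀ i i', Spread (P * a) i i' d := fun i i' =>
      (spread_mul_rs hP (hsp i i') ha.1 ha.2.2).2
    exact ih (fun A hA => hl A (List.mem_cons_of_mem a hA)) h1 h2

lemma blocks_lemma (hN : 0 < N) {ε : ℝ} (hε : 0 < ε) (hε1 : ε ≤ 1)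
    (Blk : ℕ → Matrix (Fin N) (Fin N) ℝ) (hB : ∀ b, GoodMat (Blk b))
    (good : ℕ → Prop) [DecidablePred good]
    (hg : ∀ b, good b → ∀ k j, ε ≤ Blk b k j) :
    ∀ n, 1 ≤ ((Finset.range n).filter good).card →
      Pos (((List.range n).map Blk).prod) ∧
      ∀ i i', Spread (((List.range n).map Blk).prod) i i'
        (ε⁻¹ * (1 - ε) ^ (((Finset.range n).filter good).card - 1)) := by
  intro n
  induction n with
  | zero => intro h; simp at h
  | succ n ih =>
    intro hcard
    have hsplit : ((List.range (n+1)).map Blk).prod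
        = ((List.range n).map Blk).prod * Blk n := by
      rw [List.range_succ, List.map_append, List.prod_append]
      simp
    have hfil : (Finset.range (n+1)).filter good
        = if good n then insert n ((Finset.range n).filter good)
          else (Finset.range n).filter good := by
      rw [Finset.range_add_one, Finset.filter_insert]
    by_cases hgn : good n
    · have hc1 : ((Finset.range (n+1)).filter good).card
          = ((Finset.range n).filter good).card + 1 := by
        rw [hfil, if_pos hgn, Finset.card_insert_of_notMem (by simp)]
      by_cases hc : 1 ≤ ((Finset.range n).filter good).card
      · obtain ⟨hpos, hspr⟩ := ih hc
        rw [hsplit, hc1]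
        constructor
        · exact pos_mul_rs hpos (hB n).1 (hB n).2.2
        · intro i i'
          have := spread_mul_block hN hpos (hspr i i') hε hε1
            (fun k j => hg n hgn k j) (fun k j => goodmat_entry_le_one (hB n) k j)
          have heq : (1 - ε) * (ε⁻¹ * (1 - ε) ^ (((Finset.range n).filter good).card - 1))
              = ε⁻¹ * (1 - ε) ^ (((Finset.range n).filter good).card + 1 - 1) := by
            obtain ⟨c, hc'⟩ := Nat.exists_eq_add_of_le hc
            rw [hc']
            have e1 : 1 + c - 1 = c := by omega
            have e2 : 1 + c + 1 - 1 = c + 1 := by omega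
            rw [e1, e2, pow_succ]
            ring
          rwa [heq] at this
      · push_neg at hc
        have h0 : ((Finset.range n).filter good).card = 0 := by omega
        rw [hsplit, hc1, h0]
        have hU := GoodMat.listProd (l := (List.range n).map Blk)
          (fun A hA => by
            obtain ⟨b, _, rfl⟩ := List.mem_map.1 hA
            exact hB b)
        obtain ⟨hpos, _, hspr⟩ := spread_init hN hU.1 hU.2.1 hε
          (fun k j => hg n hgn k j) (fun k j => goodmat_entry_le_one (hB n) k j)
        simpa using ⟨hpos, hspr⟩
    · have hc1 : ((Finset.range (n+1)).filter good).card
          = ((Finset.range n).filter good).card := by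
        rw [hfil, if_neg hgn]
      rw [hc1] at hcard ⊢
      obtain ⟨hpos, hspr⟩ := ih hcard
      rw [hsplit]
      refine ⟨pos_mul_rs hpos (hB n).1 (hB n).2.2, fun i i' => ?_⟩
      exact (spread_mul_rs hpos (hspr i i') (hB n).1 (hB n).2.2).2

lemma prod_range_mul (f : ℕ → Matrix (Fin N) (Fin N) ℝ) (a b : ℕ) :
    ((List.range (a + b)).map f).prod
      = ((List.range a).map f).prod * ((List.range b).map fun u => f (a + u)).prod := by
  rw [List.range_add, List.map_append, List.prod_append, List.map_map]
  rfl

lemma prod_blocks (f : ℕ → Matrix (Fin N) (Fin N) ℝ) (L : ℕ) :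
    ∀ n, ((List.range (n * L)).map f).prod
      = ((List.range n).map fun b => ((List.range L).map fun l => f (b * L + l)).prod).prod := by
  intro n
  induction n with
  | zero => simp
  | succ n ih =>
    have h1 : (n + 1) * L = n * L + L := by ring
    rw [h1, prod_range_mul, ih, List.range_succ, List.map_append, List.prod_append]
    simp


end C

section D
variable {M : ℕ} {Ω : Type*} [MeasurableSpace Ω] {μ : Measure Ω} [IsProbabilityMeasure μ]
  {ι : ℕ → Ω → Fin M} {p : Fin M → ℝ} {L : ℕ}

/-- the event that block `b` carries the word `φ b` -/
def Match (ι : ℕ → Ω → Fin M) (L : ℕ) (φ : ℕ → ℕ → Fin M) (b : ℕ) (ω : Ω) : Prop :=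
  ∀ l < L, ι (b * L + l + 1) ω = φ b l

lemma meas_match (hmeas : ∀ t, Measurable (ι t)) (φ : ℕ → ℕ → Fin M) (b : ℕ) :
    MeasurableSet {ω | Match ι L φ b ω} := by
  have h : {ω | Match ι L φ b ω} = ⋂ l ∈ Set.Iio L, (ι (b * L + l + 1)) ⁻¹' {φ b l} := by
    ext ω
    simp [Match]
  rw [h]
  exact MeasurableSet.biInter (Set.to_countable _)
    (fun l _ => (hmeas _) (measurableSet_singleton _))

lemma decode_div (hL : 0 < L) {l : ℕ} (b : ℕ) (hl : l < L) : (l + b * L) / L = b := by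
  rw [mul_comm b L, Nat.add_mul_div_left _ _ hL, Nat.div_eq_of_lt hl, Nat.zero_add]

lemma decode_mod (hL : 0 < L) {l : ℕ} (b : ℕ) (hl : l < L) : (l + b * L) % L = l := by
  rw [mul_comm b L, Nat.add_mul_mod_self_left, Nat.mod_eq_of_lt hl]

lemma cylinder_measure (hL : 0 < L)
    (hiid : ∀ (s : Finset ℕ) (g : ℕ → Fin M),
      μ {ω | ∀ t ∈ s, ι t ω = g t} = ∏ t ∈ s, ENNReal.ofReal (p (g t)))
    (S : Finset ℕ) (φ : ℕ → ℕ → Fin M) :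
    μ {ω | ∀ b ∈ S, Match ι L φ b ω}
      = ∏ b ∈ S, ∏ l ∈ Finset.range L, ENNReal.ofReal (p (φ b l)) := by
  set e : ℕ × ℕ → ℕ := fun bl => bl.1 * L + bl.2 + 1 with he
  set T : Finset ℕ := (S ×ˢ Finset.range L).image e with hT
  set g : ℕ → Fin M := fun τ => φ ((τ - 1) / L) ((τ - 1) % L) with hg
  have hge : ∀ b, ∀ l < L, g (e (b, l)) = φ b l := by
    intro b l hl
    have h1 : e (b, l) - 1 = l + b * L := by simp [he]; omega
    have h2 : (l + b * L) / L = b := decode_div hL b hl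
    have h3 : (l + b * L) % L = l := decode_mod hL b hl
    simp [hg, h1, h2, h3]
  have hset : {ω | ∀ t ∈ T, ι t ω = g t} = {ω | ∀ b ∈ S, Match ι L φ b ω} := by
    ext ω
    simp only [Set.mem_setOf_eq, hT, Finset.mem_image, Finset.mem_product, Finset.mem_range]
    constructor
    · intro h b hb l hl
      have := h (e (b, l)) ⟨(b, l), ⟨hb, hl⟩, rfl⟩
      rwa [hge b l hl] at this
    · rintro h τ ⟨⟨b, l⟩, ⟨hb, hl⟩, rfl⟩
      rw [hge b l hl]
      exact h b hb l hl
  have hinj : Set.InjOn e ↑(S ×ˢ Finset.range L) := by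
    rintro ⟨b, l⟩ hbl ⟨b', l'⟩ hbl' heq
    simp only [Finset.coe_product, Set.mem_prod, Finset.mem_coe, Finset.mem_range] at hbl hbl'
    simp only [he] at heq
    have h1 : l + b * L = l' + b' * L := by omega
    have hb : b = b' := by
      rw [← decode_div hL b hbl.2, ← decode_div hL b' hbl'.2, h1]
    subst hb
    have hl : l = l' := by omega
    exact Prod.ext rfl hl
  rw [← hset, hiid T g, hT, Finset.prod_image hinj]
  rw [Finset.prod_product]
  exact Finset.prod_congr rfl fun b hb => Finset.prod_congr rfl fun l hl =>
    by rw [hge b l (Finset.mem_range.1 hl)]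

lemma mixed_measure (hL : 0 < L) (hmeas : ∀ t, Measurable (ι t))
    (hiid : ∀ (s : Finset ℕ) (g : ℕ → Fin M),
      μ {ω | ∀ t ∈ s, ι t ω = g t} = ∏ t ∈ s, ENNReal.ofReal (p (g t)))
    (φ : ℕ → ℕ → Fin M) :
    ∀ (S2 S1 : Finset ℕ), Disjoint S1 S2 →
    μ {ω | (∀ b ∈ S1, Match ι L φ b ω) ∧ (∀ b ∈ S2, ¬ Match ι L φ b ω)}
      = (∏ b ∈ S1, ∏ l ∈ Finset.range L, ENNReal.ofReal (p (φ b l)))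
        * ∏ b ∈ S2, (1 - ∏ l ∈ Finset.range L, ENNReal.ofReal (p (φ b l))) := by
  intro S2
  induction S2 using Finset.induction_on with
  | empty =>
    intro S1 _
    simp only [Finset.notMem_empty, false_implies, implies_true, and_true, Finset.prod_empty,
      mul_one]
    exact cylinder_measure hL hiid S1 φ
  | @insert a S2' ha ih =>
    intro S1 hdisj
    have hdisj1 : Disjoint S1 S2' := by
      refine Finset.disjoint_left.2 fun x hx hx2 => ?_
      exact Finset.disjoint_left.1 hdisj hx (Finset.mem_insert_of_mem hx2)
    have haS1 : a ∉ S1 := by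
      intro hx
      exact Finset.disjoint_left.1 hdisj hx (Finset.mem_insert_self a S2')
    have hdisj2 : Disjoint (insert a S1) S2' := by
      refine Finset.disjoint_left.2 fun x hx hx2 => ?_
      rcases Finset.mem_insert.1 hx with rfl | hx1
      · exact ha hx2
      · exact Finset.disjoint_left.1 hdisj1 hx1 hx2
    set X := {ω | (∀ b ∈ S1, Match ι L φ b ω) ∧ (∀ b ∈ S2', ¬ Match ι L φ b ω)} with hX
    set Y := {ω | (∀ b ∈ insert a S1, Match ι L φ b ω) ∧ (∀ b ∈ S2', ¬ Match ι L φ b ω)} with hY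
    have hYX : Y ⊆ X := by
      rintro ω ⟨h1, h2⟩
      exact ⟨fun b hb => h1 b (Finset.mem_insert_of_mem hb), h2⟩
    have hYmeas : MeasurableSet Y := by
      have hY1 : Y = (⋂ b ∈ (insert a S1 : Finset ℕ), {ω | Match ι L φ b ω})
          ∩ ⋂ b ∈ (S2' : Finset ℕ), {ω | Match ι L φ b ω}ᶜ := by
        ext ω
        simp only [hY, Set.mem_setOf_eq, Set.mem_inter_iff, Set.mem_iInter, Set.mem_compl_iff]
      rw [hY1]
      exact (MeasurableSet.biInter (Set.to_countable _) fun b _ => meas_match hmeas φ b).inter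
        (MeasurableSet.biInter (Set.to_countable _) fun b _ => (meas_match hmeas φ b).compl)
    have hsetdiff : {ω | (∀ b ∈ S1, Match ι L φ b ω) ∧ (∀ b ∈ insert a S2', ¬ Match ι L φ b ω)}
        = X \ Y := by
      ext ω
      simp only [Set.mem_setOf_eq, Set.mem_diff, hX, hY, Finset.mem_insert]
      constructor
      · rintro ⟨h1, h2⟩
        refine ⟨⟨h1, fun b hb => h2 b (Or.inr hb)⟩, ?_⟩
        rintro ⟨h3, _⟩
        exact h2 a (Or.inl rfl) (h3 a (Or.inl rfl))
      · rintro ⟨⟨h1, h2⟩, h3⟩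
        refine ⟨h1, fun b hb => ?_⟩
        rcases hb with rfl | hb
        · intro hmatch
          exact h3 ⟨fun b' hb' => by
            rcases hb' with rfl | hb'
            · exact hmatch
            · exact h1 b' hb', h2⟩
        · exact h2 b hb
    rw [hsetdiff, measure_diff hYX hYmeas.nullMeasurableSet (measure_ne_top μ Y)]
    rw [ih S1 hdisj1, ih (insert a S1) hdisj2]
    rw [Finset.prod_insert haS1, Finset.prod_insert ha]
    set Qa := ∏ l ∈ Finset.range L, ENNReal.ofReal (p (φ a l))
    set A := ∏ b ∈ S1, ∏ l ∈ Finset.range L, ENNReal.ofReal (p (φ b l))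
    set B := ∏ b ∈ S2', (1 - ∏ l ∈ Finset.range L, ENNReal.ofReal (p (φ b l)))
    have hfin : A * B ≠ ⊤ := by
      refine ENNReal.mul_ne_top ?_ ?_
      · exact (ENNReal.prod_lt_top (fun b _ =>
          (ENNReal.prod_lt_top (fun l _ => ENNReal.ofReal_lt_top)))).ne
      · exact (ENNReal.prod_lt_top (fun b _ =>
          lt_of_le_of_lt (tsub_le_self) ENNReal.one_lt_top)).ne
    calc A * B - Qa * A * B = 1 * (A * B) - Qa * (A * B) := by rw [one_mul, mul_assoc]
      _ = (1 - Qa) * (A * B) := (ENNReal.sub_mul (fun _ _ => hfin)).symm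
      _ = A * ((1 - Qa) * B) := by ring

lemma bad_prob (hL : 0 < L) (hmeas : ∀ t, Measurable (ι t))
    (hiid : ∀ (s : Finset ℕ) (g : ℕ → Fin M),
      μ {ω | ∀ t ∈ s, ι t ω = g t} = ∏ t ∈ s, ENNReal.ofReal (p (g t)))
    (w' : ℕ → Fin M) (S : Finset ℕ) :
    μ {ω | ∀ b ∈ S, ¬ Match ι L (fun _ => w') b ω}
      = (1 - ∏ l ∈ Finset.range L, ENNReal.ofReal (p (w' l))) ^ S.card := by
  have h := mixed_measure hL hmeas hiid (fun _ => w') S ∅ (Finset.disjoint_empty_left S)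
  simp only [Finset.notMem_empty, false_implies, implies_true, true_and,
    Finset.prod_empty, one_mul] at h
  rw [h, Finset.prod_const]

lemma count_prob (hL : 0 < L) (hmeas : ∀ t, Measurable (ι t))
    (hiid : ∀ (s : Finset ℕ) (g : ℕ → Fin M),
      μ {ω | ∀ t ∈ s, ι t ω = g t} = ∏ t ∈ s, ENNReal.ofReal (p (g t)))
    (w' : ℕ → Fin M) (g s : ℕ) :
    μ {ω | ¬ ∀ j < g, ∃ b, j * s ≤ b ∧ b < (j + 1) * s ∧ Match ι L (fun _ => w') b ω}
      ≤ (g : ENNReal) * (1 - ∏ l ∈ Finset.range L, ENNReal.ofReal (p (w' l))) ^ s := by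
  have hset : {ω | ¬ ∀ j < g, ∃ b, j * s ≤ b ∧ b < (j + 1) * s ∧ Match ι L (fun _ => w') b ω}
      = ⋃ j ∈ Finset.range g,
          {ω | ∀ b ∈ Finset.Ico (j * s) ((j + 1) * s), ¬ Match ι L (fun _ => w') b ω} := by
    ext ω
    simp only [Set.mem_setOf_eq, Set.mem_iUnion, Finset.mem_range, Finset.mem_Ico]
    push_neg
    constructor
    · rintro ⟨j, hj, hb⟩
      exact ⟨j, hj, fun b hb' => hb b hb'.1 hb'.2⟩
    · rintro ⟨j, hj, hb⟩
      exact ⟨j, hj, fun b h1 h2 => hb b ⟨h1, h2⟩⟩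
  rw [hset]
  calc μ (⋃ j ∈ Finset.range g,
        {ω | ∀ b ∈ Finset.Ico (j * s) ((j + 1) * s), ¬ Match ι L (fun _ => w') b ω})
      ≤ ∑ j ∈ Finset.range g,
        μ {ω | ∀ b ∈ Finset.Ico (j * s) ((j + 1) * s), ¬ Match ι L (fun _ => w') b ω} :=
          measure_biUnion_finset_le _ _
    _ = ∑ _j ∈ Finset.range g,
        (1 - ∏ l ∈ Finset.range L, ENNReal.ofReal (p (w' l))) ^ s := by
          refine Finset.sum_congr rfl fun j _ => ?_
          rw [bad_prob hL hmeas hiid w' _, Nat.card_Ico]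
          congr 1
          rw [Nat.add_mul, Nat.one_mul]
          omega
    _ = (g : ENNReal) * (1 - ∏ l ∈ Finset.range L, ENNReal.ofReal (p (w' l))) ^ s := by
          rw [Finset.sum_const, Finset.card_range, nsmul_eq_mul]


end D

section E
variable {N M : ℕ} {Ω : Type*} [MeasurableSpace Ω]

lemma meas_prod_entry (K : Fin M → Matrix (Fin N) (Fin N) ℝ)
    (ι : ℕ → Ω → Fin M) (hmeas : ∀ t, Measurable (ι t)) :
    ∀ (t : ℕ) (i j : Fin N),
      Measurable fun ω => (((List.range t).map fun u => K (ι (u + 1) ω)).prod) i j := by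
  intro t
  induction t with
  | zero => intro i j; simp only [List.range_zero, List.map_nil, List.prod_nil]; exact measurable_const
  | succ n ih =>
    intro i j
    simp only [List.range_succ, List.map_append, List.prod_append, List.map_cons, List.map_nil,
      List.prod_cons, List.prod_nil, mul_one, Matrix.mul_apply]
    exact Finset.measurable_sum _ fun k _ =>
      (ih i k).mul ((measurable_of_countable fun a : Fin M => K a k j).comp (hmeas (n + 1)))

lemma meas_card_filter {L : ℕ} (ι : ℕ → Ω → Fin M) (hmeas : ∀ t, Measurable (ι t))
    (w' : ℕ → Fin M) (n : ℕ) [∀ b ω, Decidable (∀ l < L, ι (b * L + l + 1) ω = w' l)] :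
    Measurable fun ω =>
      ((Finset.range n).filter fun b => ∀ l < L, ι (b * L + l + 1) ω = w' l).card := by
  have h : (fun ω => ((Finset.range n).filter fun b => ∀ l < L, ι (b * L + l + 1) ω = w' l).card)
      = fun ω => ∑ b ∈ Finset.range n, if (∀ l < L, ι (b * L + l + 1) ω = w' l) then 1 else 0 := by
    funext ω
    rw [Finset.card_filter]
  rw [h]
  refine Finset.measurable_sum _ fun b _ => Measurable.ite ?_ measurable_const measurable_const
  have heq : {ω | ∀ l < L, ι (b * L + l + 1) ω = w' l}
      = ⋂ l ∈ Set.Iio L, (ι (b * L + l + 1)) ⁻¹' {w' l} := by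
    ext ω; simp
  show MeasurableSet {ω | ∀ l < L, ι (b * L + l + 1) ω = w' l}
  rw [heq]
  exact MeasurableSet.biInter (Set.to_countable _)
    (fun l _ => (hmeas _) (measurableSet_singleton _))


lemma prod_getD {N M : ℕ} (K : Fin M → Matrix (Fin N) (Fin N) ℝ) :
    ∀ (l : List (Fin M)) (d : Fin M),
      ((List.range l.length).map fun i => K (l.getD i d)).prod = (l.map K).prod := by
  intro l
  induction l with
  | nil => intro d; simp
  | cons a t ih =>
    intro d
    simp only [List.length_cons, List.range_succ_eq_map, List.map_cons, List.map_map,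
      List.prod_cons]
    have h : (List.map ((fun i => K ((a :: t).getD i d)) ∘ Nat.succ) (List.range t.length))
        = List.map (fun i => K (t.getD i d)) (List.range t.length) :=
      List.map_congr_left fun i _ => by simp [List.getD_cons_succ]
    rw [h, ih d]
    congr 1


end E

end Stmt15Aux

open Stmt15Aux

set_option maxHeartbeats 2000000 in
theorem stmt15 {N M : ℕ} (hN : 1 ≤ N) (hM : 1 ≤ M)
    (K : Fin M → Matrix (Fin N) (Fin N) ℝ)
    (hK : ∀ k, RowStochastic (K k))
    (hdiag : ∀ k i, 0 < K k i i)
    (p : Fin M → ℝ) (hp : ∀ k, 0 < p k) (hpsum : ∑ k, p k = 1)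
    (hprim : _root_.IsPrimitive (∑ k, p k • K k))
    -- `(K(t))_{t ≥ 1}` is an i.i.d. sequence of random matrices, `K(t) = K (ι t ω)`,
    -- with `ℙ[K(t) = Kᵢ] = pᵢ`:
    {Ω : Type*} [MeasurableSpace Ω] (μ : Measure Ω) [IsProbabilityMeasure μ]
    (ι : ℕ → Ω → Fin M) (hmeas : ∀ t, Measurable (ι t))
    (hiid : ∀ (s : Finset ℕ) (g : ℕ → Fin M),
      μ {ω | ∀ t ∈ s, ι t ω = g t} = ∏ t ∈ s, ENNReal.ofReal (p (g t)))
    -- `P(t) = K(1) K(2) ⋯ K(t)`, `s(t)ᵀ = x(0)ᵀ P(t)`, `w(t)ᵀ = 𝟙ᵀ P(t)`, `x(t) = s(t)/w(t)`: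
    (P : ℕ → Ω → Matrix (Fin N) (Fin N) ℝ)
    (hP : ∀ t ω, P t ω = ((List.range t).map fun u => K (ι (u + 1) ω)).prod)
    (x0 : Fin N → ℝ)
    (x : ℕ → Ω → Fin N → ℝ)
    (hx : ∀ t ω j, x t ω j = (∑ i, P t ω i j * x0 i) / (∑ i, P t ω i j))
    (xave : ℝ) (hxave : xave = (N : ℝ)⁻¹ * ∑ i, x0 i) :
    Tendsto (fun t => ∫ ω, (∑ j, (x t ω j - xave) ^ 2) ∂μ) atTop (nhds 0) := by
  classical
  have hN0 : 0 < N := hN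
  have hKg : ∀ k, GoodMat (K k) := fun k => ⟨(hK k).1, (hK k).2, hdiag k⟩
  obtain ⟨wl, hwlen, hwpos⟩ := exists_allpos hM hKg hp hpsum hprim
  set L := wl.length with hLdef
  have hL : 0 < L := hwlen
  set w' : ℕ → Fin M := fun i => wl.getD i ⟨0, hM⟩ with hw'
  set Bmat := (wl.map K).prod with hBmatdef
  have hBg : GoodMat Bmat := prodWord_good hKg wl
  have hBmat_eq : ((List.range L).map fun l => K (w' l)).prod = Bmat := prod_getD K wl _
  have hneNN : (Finset.univ : Finset (Fin N × Fin N)).Nonempty :=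
    Finset.univ_nonempty_iff.2 (Nonempty.intro (⟨0, hN0⟩, ⟨0, hN0⟩))
  set ε := Finset.univ.inf' hneNN (fun pr : Fin N × Fin N => Bmat pr.1 pr.2) with hεdef
  have hε : 0 < ε := by
    rw [hεdef, Finset.lt_inf'_iff]
    exact fun pr _ => hwpos pr.1 pr.2
  have hεle : ∀ i j, ε ≤ Bmat i j := fun i j =>
    Finset.inf'_le (fun pr : Fin N × Fin N => Bmat pr.1 pr.2) (Finset.mem_univ (i, j))
  have hε1 : ε ≤ 1 :=
    le_trans (hεle ⟨0, hN0⟩ ⟨0, hN0⟩) (goodmat_entry_le_one hBg _ _)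
  set lam := 1 - ε with hlamdef
  have hlam0 : 0 ≤ lam := by rw [hlamdef]; linarith
  have hlam1 : lam < 1 := by rw [hlamdef]; linarith
  set q := ∏ l ∈ Finset.range L, p (w' l) with hqdef
  have hq0 : 0 < q := Finset.prod_pos fun l _ => hp _
  have hple : ∀ k, p k ≤ 1 := fun k =>
    hpsum ▸ Finset.single_le_sum (fun a _ => (hp a).le) (Finset.mem_univ k)
  have hq1 : q ≤ 1 := Finset.prod_le_one (fun l _ => (hp _).le) (fun l _ => hple _)
  set C0 := ∑ i, |x0 i| with hC0def
  have hC0 : 0 ≤ C0 := Finset.sum_nonneg fun i _ => abs_nonneg _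
  set C1 := (N : ℝ) * (2 * C0) ^ 2 with hC1def
  have hC1 : 0 ≤ C1 := by positivity
  set G : ℕ → Ω → ℕ :=
    fun n ω => ((Finset.range n).filter fun b => Match ι L (fun _ => w') b ω).card with hGdef
  -- products are good matrices
  have hPg : ∀ t ω, GoodMat (P t ω) := by
    intro t ω
    rw [hP]
    exact GoodMat.listProd fun A hA => by
      obtain ⟨u, _, rfl⟩ := List.mem_map.1 hA; exact hKg _
  -- key deterministic bound
  have hkey : ∀ (t : ℕ) (ω : Ω) (gg : ℕ), 1 ≤ gg → gg ≤ G (t / L) ω →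
      (∑ j, (x t ω j - xave) ^ 2) ≤ C0 ^ 2 * (ε⁻¹ * lam ^ (gg - 1)) ^ 2 := by
    intro t ω gg hgg1 hggle
    set n := t / L with hn
    have hGn : G n ω = ((Finset.range n).filter fun b => Match ι L (fun _ => w') b ω).card := rfl
    rw [hGn] at hggle
    set r := t % L with hr
    set f : ℕ → Matrix (Fin N) (Fin N) ℝ := fun u => K (ι (u + 1) ω) with hf
    set Blk : ℕ → Matrix (Fin N) (Fin N) ℝ :=
      fun b => ((List.range L).map fun l => f (b * L + l)).prod with hBlkdef
    have hsplit : P t ω = ((List.range n).map Blk).prod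
        * (((List.range r).map fun u => f (n * L + u)).prod) := by
      rw [hP]
      have ht : n * L + r = t := by rw [mul_comm]; exact Nat.div_add_mod t L
      rw [← ht, prod_range_mul f (n * L) r, prod_blocks f L n]
    have hBlkg : ∀ b, GoodMat (Blk b) := fun b =>
      GoodMat.listProd fun A hA => by
        obtain ⟨u, _, rfl⟩ := List.mem_map.1 hA; exact hKg _
    have hgd : ∀ b, Match ι L (fun _ => w') b ω → ∀ k j, ε ≤ Blk b k j := by
      intro b hb k j
      have hBeq : Blk b = Bmat := by
        show ((List.range L).map fun l => f (b * L + l)).prod = Bmat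
        rw [← hBmat_eq]
        congr 1
        refine List.map_congr_left fun l hl => ?_
        show K (ι (b * L + l + 1) ω) = K (w' l)
        rw [hb l (List.mem_range.1 hl)]
      rw [hBeq]
      exact hεle k j
    have hcard1 : 1 ≤ ((Finset.range n).filter fun b => Match ι L (fun _ => w') b ω).card :=
      le_trans hgg1 hggle
    obtain ⟨hpos, hspr⟩ := blocks_lemma hN0 hε hε1 Blk hBlkg
      (fun b => Match ι L (fun _ => w') b ω) hgd n hcard1
    obtain ⟨hposP, hsprP⟩ := tail_lemma ((List.range r).map fun u => f (n * L + u))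
      (fun A hA => by obtain ⟨u, _, rfl⟩ := List.mem_map.1 hA; exact hKg _) hpos hspr
    rw [← hsplit] at hposP hsprP
    set c := ((Finset.range n).filter fun b => Match ι L (fun _ => w') b ω).card with hc
    have hdle : ε⁻¹ * lam ^ (c - 1) ≤ ε⁻¹ * lam ^ (gg - 1) := by
      refine mul_le_mul_of_nonneg_left ?_ (inv_nonneg.2 hε.le)
      refine pow_le_pow_of_le_one hlam0 (by rw [hlamdef]; linarith) ?_
      have : gg ≤ c := hggle
      omega
    have hsprP' : ∀ i i', Spread (P t ω) i i' (ε⁻¹ * lam ^ (gg - 1)) := by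
      intro i i' j j'
      exact le_trans (hsprP i i' j j') hdle
    have hbound := xbound_of_spread hN0 x0 (fun a => (hPg t ω).2.1 a) hposP hsprP'
      (by positivity)
    calc (∑ j, (x t ω j - xave) ^ 2)
        = ∑ j, ((∑ i, P t ω i j * x0 i) / (∑ i, P t ω i j) - (N : ℝ)⁻¹ * ∑ i, x0 i) ^ 2 := by
          refine Finset.sum_congr rfl fun j _ => ?_
          rw [hx, hxave]
      _ ≤ C0 ^ 2 * (ε⁻¹ * lam ^ (gg - 1)) ^ 2 := hbound
  -- universal bound
  have huniv : ∀ (t : ℕ) (ω : Ω), (∑ j, (x t ω j - xave) ^ 2) ≤ C1 := by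
    intro t ω
    have hw : ∀ j, 0 < ∑ i, P t ω i j := fun j =>
      lt_of_lt_of_le ((hPg t ω).2.2 j)
        (Finset.single_le_sum (fun i _ => (hPg t ω).1 i j) (Finset.mem_univ j))
    have h := xbound_triv hN0 x0 (hPg t ω).1 hw
    calc (∑ j, (x t ω j - xave) ^ 2)
        = ∑ j, ((∑ i, P t ω i j * x0 i) / (∑ i, P t ω i j) - (N : ℝ)⁻¹ * ∑ i, x0 i) ^ 2 := by
          refine Finset.sum_congr rfl fun j _ => ?_
          rw [hx, hxave]
      _ ≤ C1 := h
  -- measurability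
  have hmeasx : ∀ t j, Measurable fun ω => x t ω j := by
    intro t j
    have h1 : ∀ i, Measurable fun ω => P t ω i j := by
      intro i
      have h : (fun ω => P t ω i j)
          = fun ω => (((List.range t).map fun u => K (ι (u + 1) ω)).prod) i j := by
        funext ω; rw [hP]
      rw [h]
      exact meas_prod_entry K ι hmeas t i j
    have hx' : (fun ω => x t ω j)
        = fun ω => (∑ i, P t ω i j * x0 i) / (∑ i, P t ω i j) := funext fun ω => hx t ω j
    rw [hx']
    exact (Finset.measurable_sum _ fun i _ => (h1 i).mul_const _).div
      (Finset.measurable_sum _ fun i _ => h1 i)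
  have hmeasY : ∀ t, Measurable fun ω => ∑ j, (x t ω j - xave) ^ 2 := fun t =>
    Finset.measurable_sum _ fun j _ => ((hmeasx t j).sub measurable_const).pow_const 2
  have hYnonneg : ∀ (t : ℕ) (ω : Ω), 0 ≤ ∑ j, (x t ω j - xave) ^ 2 := fun t ω =>
    Finset.sum_nonneg fun j _ => sq_nonneg _
  have hint : ∀ t, Integrable (fun ω => ∑ j, (x t ω j - xave) ^ 2) μ := by
    intro t
    refine (integrable_const C1).mono' (hmeasY t).aestronglyMeasurable ?_
    refine Filter.Eventually.of_forall fun ω => ?_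
    rw [Real.norm_eq_abs, abs_of_nonneg (hYnonneg t ω)]
    exact huniv t ω
  have hmeasmatch : ∀ b, MeasurableSet {ω | Match ι L (fun _ => w') b ω} :=
    fun b => meas_match hmeas (fun _ => w') b
  have hmeasG : ∀ n, Measurable fun ω => G n ω := by
    intro n
    have h : (fun ω => G n ω)
        = fun ω => ∑ b ∈ Finset.range n, if Match ι L (fun _ => w') b ω then 1 else 0 := by
      funext ω
      rw [hGdef]
      exact Finset.card_filter _ _
    rw [h]
    exact Finset.measurable_sum _ fun b _ =>
      Measurable.ite (hmeasmatch b) measurable_const measurable_const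
  -- final limit
  rw [Metric.tendsto_atTop]
  intro ε0 hε0
  have htend1 : Tendsto (fun k : ℕ => C0 ^ 2 * (ε⁻¹ * lam ^ k) ^ 2) atTop (nhds 0) := by
    have h := tendsto_pow_atTop_nhds_zero_of_lt_one hlam0 hlam1
    have h1 : Tendsto (fun k : ℕ => ε⁻¹ * lam ^ k) atTop (nhds (ε⁻¹ * 0)) := h.const_mul _
    rw [mul_zero] at h1
    have h2 : Tendsto (fun k : ℕ => (ε⁻¹ * lam ^ k) ^ 2) atTop (nhds 0) := by
      have h3 := h1.mul h1
      rw [mul_zero] at h3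
      refine h3.congr fun k => ?_
      rw [pow_two]
    have h4 := h2.const_mul (C0 ^ 2)
    rwa [mul_zero] at h4
  obtain ⟨k0, hk0⟩ := (htend1.eventually_lt_const (by positivity : (0:ℝ) < ε0 / 2)).exists
  set gg := k0 + 1 with hgg
  set δ := C0 ^ 2 * (ε⁻¹ * lam ^ (gg - 1)) ^ 2 with hδdef
  have hδ0 : 0 ≤ δ := by positivity
  have hδlt : δ < ε0 / 2 := by
    have : gg - 1 = k0 := by omega
    rw [hδdef, this]
    exact hk0
  have htend2 : Tendsto (fun s : ℕ => (gg : ℝ) * (1 - q) ^ s) atTop (nhds 0) := by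
    have h := tendsto_pow_atTop_nhds_zero_of_lt_one (by linarith : (0:ℝ) ≤ 1 - q)
      (by linarith : (1:ℝ) - q < 1)
    have h2 := h.const_mul (gg : ℝ)
    rwa [mul_zero] at h2
  obtain ⟨s0, hs0⟩ := (htend2.eventually_lt_const
    (by positivity : (0:ℝ) < ε0 / (2 * (C1 + 1)))).exists
  refine ⟨L * (gg * s0), fun t ht => ?_⟩
  set n := t / L with hn
  have hns : gg * s0 ≤ n := by
    rw [hn, Nat.le_div_iff_mul_le hL]
    calc gg * s0 * L = L * (gg * s0) := by ring
      _ ≤ t := ht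
  set A := {ω | gg ≤ G n ω} with hA
  have hAmeas : MeasurableSet A := by
    have h : A = (fun ω => G n ω) ⁻¹' (Set.Ici gg) := by
      ext ω; simp [hA]
    rw [h]
    exact (hmeasG n) measurableSet_Ici
  have hYle : ∀ ω, (∑ j, (x t ω j - xave) ^ 2) ≤ Aᶜ.indicator (fun _ => C1) ω + δ := by
    intro ω
    by_cases hω : ω ∈ A
    · rw [Set.indicator_of_notMem (by simpa using hω), zero_add]
      exact hkey t ω gg (by omega) hω
    · rw [Set.indicator_of_mem (by simpa using hω)]
      linarith [huniv t ω]
  have hI : (∫ ω, (∑ j, (x t ω j - xave) ^ 2) ∂μ) ≤ C1 * (μ Aᶜ).toReal + δ := by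
    calc (∫ ω, (∑ j, (x t ω j - xave) ^ 2) ∂μ)
        ≤ ∫ ω, (Aᶜ.indicator (fun _ => C1) ω + δ) ∂μ := by
          refine integral_mono (hint t) ?_ hYle
          exact ((integrable_const C1).indicator hAmeas.compl).add (integrable_const δ)
      _ = C1 * (μ Aᶜ).toReal + δ := by
          rw [integral_add ((integrable_const C1).indicator hAmeas.compl) (integrable_const δ),
            integral_indicator_const _ hAmeas.compl, integral_const]
          simp [measure_univ, mul_comm, measureReal_def]
  -- bound on μ Aᶜ
  have hsub : Aᶜ ⊆ {ω | ¬ ∀ j < gg, ∃ b, j * s0 ≤ b ∧ b < (j + 1) * s0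
      ∧ Match ι L (fun _ => w') b ω} := by
    intro ω hω
    simp only [Set.mem_compl_iff, hA, Set.mem_setOf_eq, not_le] at hω
    intro hall
    refine absurd hω (not_lt.2 ?_)
    choose F hF1 hF2 hF3 using hall
    have hcard : gg = (Finset.range gg).card := (Finset.card_range gg).symm
    show gg ≤ ((Finset.range n).filter fun b => Match ι L (fun _ => w') b ω).card
    rw [hcard]
    refine Finset.card_le_card_of_injOn
      (fun j => if h : j < gg then F j h else 0) ?_ ?_
    · intro j hj
      have hj' := Finset.mem_range.1 hj
      simp only [dif_pos hj']
      refine Finset.mem_filter.2 ⟨Finset.mem_range.2 ?_, hF3 j hj'⟩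
      calc F j hj' < (j + 1) * s0 := hF2 j hj'
        _ ≤ gg * s0 := Nat.mul_le_mul_right s0 (by omega)
        _ ≤ n := hns
    · intro j hj j' hj' heq
      have hjlt := Finset.mem_range.1 (Finset.mem_coe.1 hj)
      have hjlt' := Finset.mem_range.1 (Finset.mem_coe.1 hj')
      simp only [dif_pos hjlt, dif_pos hjlt'] at heq
      by_contra hne
      rcases Nat.lt_or_ge j j' with hlt | hge
      · have h1 : F j hjlt < (j + 1) * s0 := hF2 j hjlt
        have h2 : j' * s0 ≤ F j' hjlt' := hF1 j' hjlt'
        have h3 : (j + 1) * s0 ≤ j' * s0 := Nat.mul_le_mul_right s0 (by omega)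
        omega
      · have hlt' : j' < j := by omega
        have h1 : F j' hjlt' < (j' + 1) * s0 := hF2 j' hjlt'
        have h2 : j * s0 ≤ F j hjlt := hF1 j hjlt
        have h3 : (j' + 1) * s0 ≤ j * s0 := Nat.mul_le_mul_right s0 (by omega)
        omega
  have hμA : (μ Aᶜ).toReal ≤ (gg : ℝ) * (1 - q) ^ s0 := by
    have h1 := measure_mono (μ := μ) hsub
    have h2 := count_prob (μ := μ) hL hmeas hiid w' gg s0
    have hQen : (∏ l ∈ Finset.range L, ENNReal.ofReal (p (w' l))) = ENNReal.ofReal q := by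
      rw [hqdef]
      exact (ENNReal.ofReal_prod_of_nonneg (fun l _ => (hp _).le)).symm
    have h3 : (1 : ENNReal) - ENNReal.ofReal q = ENNReal.ofReal (1 - q) := by
      rw [ENNReal.ofReal_sub _ hq0.le, ENNReal.ofReal_one]
    have h4 : μ Aᶜ ≤ ENNReal.ofReal ((gg : ℝ) * (1 - q) ^ s0) := by
      calc μ Aᶜ ≤ μ {ω | ¬ ∀ j < gg, ∃ b, j * s0 ≤ b ∧ b < (j + 1) * s0
            ∧ Match ι L (fun _ => w') b ω} := h1
        _ ≤ (gg : ENNReal) * (1 - ∏ l ∈ Finset.range L, ENNReal.ofReal (p (w' l))) ^ s0 := h2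
        _ = ENNReal.ofReal ((gg : ℝ) * (1 - q) ^ s0) := by
            rw [hQen, h3, ← ENNReal.ofReal_pow (by linarith : (0:ℝ) ≤ 1 - q),
              ← ENNReal.ofReal_natCast gg,
              ← ENNReal.ofReal_mul (by positivity : (0:ℝ) ≤ (gg:ℝ))]
    exact ENNReal.toReal_le_of_le_ofReal (mul_nonneg (by positivity) (pow_nonneg (by linarith) s0)) h4
  -- conclude
  have hpos : 0 ≤ ∫ ω, (∑ j, (x t ω j - xave) ^ 2) ∂μ :=
    integral_nonneg fun ω => hYnonneg t ω
  rw [Real.dist_eq, sub_zero, abs_of_nonneg hpos]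
  have hu : ε0 / (2 * (C1 + 1)) * (2 * (C1 + 1)) = ε0 :=
    div_mul_cancel₀ _ (by positivity)
  have hXle : C1 * (μ Aᶜ).toReal ≤ C1 * ((gg : ℝ) * (1 - q) ^ s0) :=
    mul_le_mul_of_nonneg_left hμA hC1
  have hX2 : C1 * ((gg : ℝ) * (1 - q) ^ s0) ≤ C1 * (ε0 / (2 * (C1 + 1))) :=
    mul_le_mul_of_nonneg_left hs0.le hC1
  have hupos : 0 < ε0 / (2 * (C1 + 1)) := by positivity
  calc (∫ ω, (∑ j, (x t ω j - xave) ^ 2) ∂μ) ≤ C1 * (μ Aᶜ).toReal + δ := hI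
    _ < ε0 := by nlinarith [hXle, hX2, hδlt, hu, hupos, hC1]
end

section
/- Let N ≥ 1. For each function ℓ : {1,…,N} → {1,…,N}, define the N×N matrix K(ℓ) = (1/2)I + (1/2)Σᵢ₌₁ᴺ eᵢ e_{ℓ(i)}ᵀ (the Push-Sum update matrix of Kempe et al.). Then the average over all N^N functions ℓ satisfies N^{−N} Σ_ℓ K(ℓ)K(ℓ)ᵀ = (1/2 − 1/(4N))·I + (3/4)·J, and consequently (I−J) · [ N^{−N} Σ_ℓ K(ℓ)K(ℓ)ᵀ ] · (I−J) = (1/2 − 1/(4N))·(I−J). -/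
open Matrix Finset

/-- `J = (1/N) 𝟙 𝟙ᵀ`, the `N × N` averaging matrix. -/
noncomputable def Jmat (N : ℕ) : Matrix (Fin N) (Fin N) ℝ :=
  Matrix.of fun _ _ => (N : ℝ)⁻¹

lemma card_ne_sub {α : Type*} [Fintype α] [DecidableEq α] (b : α) :
    Fintype.card {j // j ≠ b} = Fintype.card α - 1 := by
  simp [Fintype.card_subtype_compl]

lemma sum_eval {α β : Type*} [Fintype α] [DecidableEq α] [Fintype β] (b : α) (g : β → ℝ) :
    ∑ ℓ : α → β, g (ℓ b) = (Fintype.card β : ℝ) ^ (Fintype.card α - 1) * ∑ x, g x := by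
  rw [← (Equiv.funSplitAt b β).symm.sum_comp (fun ℓ => g (ℓ b))]
  simp [Fintype.sum_prod_type, Equiv.funSplitAt, Equiv.piSplitAt, Finset.sum_const,
    card_ne_sub b, Finset.mul_sum, Finset.sum_mul, mul_comm]

lemma sum_eval2 {N : ℕ} (a b : Fin N) (hab : b ≠ a) (f : Fin N → Fin N → ℝ) :
    ∑ ℓ : Fin N → Fin N, f (ℓ a) (ℓ b) = (N : ℝ) ^ (N - 2) * ∑ x, ∑ y, f x y := by
  rw [← (Equiv.funSplitAt a (Fin N)).symm.sum_comp (fun ℓ => f (ℓ a) (ℓ b))]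
  have key : ∀ p : Fin N × ({j // j ≠ a} → Fin N),
      f (((Equiv.funSplitAt a (Fin N)).symm p) a) (((Equiv.funSplitAt a (Fin N)).symm p) b)
        = f p.1 (p.2 ⟨b, hab⟩) := by
    intro p
    simp [Equiv.funSplitAt, Equiv.piSplitAt, hab]
  rw [Finset.sum_congr rfl fun p _ => key p, Fintype.sum_prod_type]
  have h2 : ∀ x : Fin N, ∑ h : {j // j ≠ a} → Fin N, f x (h ⟨b, hab⟩)
      = (N : ℝ) ^ (N - 2) * ∑ y, f x y := by
    intro x
    have h := sum_eval (α := {j // j ≠ a}) (β := Fin N) ⟨b, hab⟩ (f x)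
    rw [card_ne_sub, Fintype.card_fin,
      show N - 1 - 1 = N - 2 by omega] at h
    exact h
  rw [Finset.sum_congr rfl fun x _ => h2 x, ← Finset.mul_sum]

theorem stmt17 {N : ℕ} (hN : 1 ≤ N)
    -- the Push-Sum update matrices `K(ℓ) = (1/2)I + (1/2)Σᵢ eᵢ e_{ℓ(i)}ᵀ`:
    (K : (Fin N → Fin N) → Matrix (Fin N) (Fin N) ℝ)
    (hKdef : ∀ ℓ, K ℓ =
      (1 / 2 : ℝ) • 1 + (1 / 2 : ℝ) • ∑ i, Matrix.single i (ℓ i) (1 : ℝ)) :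
    ((N : ℝ) ^ N)⁻¹ • (∑ ℓ : Fin N → Fin N, K ℓ * (K ℓ)ᵀ) =
        (1 / 2 - 1 / (4 * N) : ℝ) • (1 : Matrix (Fin N) (Fin N) ℝ) +
          (3 / 4 : ℝ) • Jmat N ∧
      (1 - Jmat N) * (((N : ℝ) ^ N)⁻¹ • (∑ ℓ : Fin N → Fin N, K ℓ * (K ℓ)ᵀ)) *
          (1 - Jmat N) =
        (1 / 2 - 1 / (4 * N) : ℝ) • (1 - Jmat N) := by
  have hN0 : (N : ℝ) ≠ 0 := by positivity
  -- entry formula for K ℓ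
  have hK : ∀ (ℓ : Fin N → Fin N) (a c : Fin N),
      K ℓ a c = 1/2 * (if a = c then 1 else 0) + 1/2 * (if ℓ a = c then 1 else 0) := by
    intro ℓ a c
    rw [hKdef]
    simp [Matrix.add_apply, Matrix.one_apply, Matrix.sum_apply, Matrix.single,
      ite_and, Finset.sum_ite_eq, Finset.sum_ite_eq']
  have hent : ∀ (ℓ : Fin N → Fin N) (a b : Fin N),
      (K ℓ * (K ℓ)ᵀ) a b = 1/4 * ((if a = b then (1:ℝ) else 0) + (if ℓ b = a then 1 else 0)
        + (if ℓ a = b then 1 else 0) + (if ℓ a = ℓ b then 1 else 0)) := by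
    intro ℓ a b
    rw [Matrix.mul_apply]
    simp only [Matrix.transpose_apply, hK]
    rw [Finset.sum_congr rfl (fun c _ => by ring_nf :
      ∀ c ∈ univ, (1/2 * (if a = c then (1:ℝ) else 0) + 1/2 * (if ℓ a = c then 1 else 0)) *
        (1/2 * (if b = c then 1 else 0) + 1/2 * (if ℓ b = c then 1 else 0)) =
      1/4 * ((if a = c then (1:ℝ) else 0) * (if b = c then 1 else 0))
      + 1/4 * ((if a = c then (1:ℝ) else 0) * (if ℓ b = c then 1 else 0))
      + 1/4 * ((if ℓ a = c then (1:ℝ) else 0) * (if b = c then 1 else 0))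
      + 1/4 * ((if ℓ a = c then (1:ℝ) else 0) * (if ℓ b = c then 1 else 0)))]
    simp only [Finset.sum_add_distrib, ← Finset.mul_sum, mul_ite, ite_mul, mul_one, mul_zero,
      zero_mul, Finset.sum_ite_eq, Finset.sum_ite_eq', Finset.mem_univ, if_true]
    rw [show (if a = ℓ b then (1/4:ℝ) else 0) = (if ℓ b = a then (1/4:ℝ) else 0) from by simp [eq_comm]]
    split_ifs <;> norm_num
  have main : ((N : ℝ) ^ N)⁻¹ • (∑ ℓ : Fin N → Fin N, K ℓ * (K ℓ)ᵀ) =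
      (1 / 2 - 1 / (4 * N) : ℝ) • (1 : Matrix (Fin N) (Fin N) ℝ) + (3 / 4 : ℝ) • Jmat N := by
    ext a b
    rw [Matrix.smul_apply, Matrix.sum_apply]
    rw [Finset.sum_congr rfl fun ℓ _ => hent ℓ a b]
    simp only [Finset.sum_add_distrib, ← Finset.mul_sum]
    have s1 : ∑ ℓ : Fin N → Fin N, (if ℓ b = a then (1:ℝ) else 0) = (N:ℝ)^(N-1) := by
      rw [sum_eval b (fun x => if x = a then (1:ℝ) else 0)]
      simp [Fintype.card_fin]
    have s2 : ∑ ℓ : Fin N → Fin N, (if ℓ a = b then (1:ℝ) else 0) = (N:ℝ)^(N-1) := by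
      rw [sum_eval a (fun x => if x = b then (1:ℝ) else 0)]
      simp [Fintype.card_fin]
    have scard : ((Finset.univ : Finset (Fin N → Fin N)).card : ℝ) = (N:ℝ)^N := by
      simp [Finset.card_univ, Fintype.card_fun]
    rw [s1, s2]
    simp only [Matrix.add_apply, Matrix.smul_apply, Matrix.one_apply, Jmat, Matrix.of_apply,
      smul_eq_mul]
    by_cases hab : a = b
    · subst hab
      simp only [if_pos rfl, Finset.sum_const, Finset.card_univ, nsmul_eq_mul, mul_one]
      have hcard : ((Fintype.card (Fin N → Fin N) : ℕ) : ℝ) = (N:ℝ)^N := by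
        simp [Fintype.card_fun]
      rw [hcard]
      obtain ⟨m, rfl⟩ : ∃ m, N = m + 1 := ⟨N - 1, by omega⟩
      have hx : ((m:ℝ) + 1) ≠ 0 := by positivity
      rw [show m + 1 - 1 = m from rfl]
      push_cast at hN0 ⊢
      field_simp
      ring
    · have hab' : b ≠ a := fun h => hab h.symm
      have s4 : ∑ ℓ : Fin N → Fin N, (if ℓ a = ℓ b then (1:ℝ) else 0)
          = (N:ℝ)^(N-2) * (N:ℝ) := by
        rw [sum_eval2 a b hab' (fun x y => if x = y then (1:ℝ) else 0)]
        congr 1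
        simp [Finset.sum_ite_eq]
      have hN2 : 2 ≤ N := by
        by_contra h
        have hN1 : N = 1 := by omega
        subst hN1
        exact hab (Subsingleton.elim a b)
      rw [s4]
      simp only [if_neg hab, Finset.sum_const, Finset.card_univ, nsmul_eq_mul, mul_zero]
      obtain ⟨m, rfl⟩ : ∃ m, N = m + 2 := ⟨N - 2, by omega⟩
      have hx : ((m:ℝ) + 2) ≠ 0 := by positivity
      rw [show m + 2 - 1 = m + 1 from rfl, show m + 2 - 2 = m from rfl]
      push_cast at hN0 ⊢
      field_simp
      ring
  refine ⟨main, ?_⟩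
  rw [main]
  have hJ : Jmat N * Jmat N = Jmat N := by
    ext a b
    simp only [Jmat, Matrix.mul_apply, Matrix.of_apply, Finset.sum_const, Finset.card_univ,
      Fintype.card_fin, nsmul_eq_mul]
    field_simp
  set c : ℝ := (1 / 2 - 1 / (4 * N) : ℝ)
  have e1 : (1 - Jmat N) * (c • 1 + (3/4 : ℝ) • Jmat N) = c • (1 - Jmat N) := by
    rw [mul_add, Matrix.mul_smul, Matrix.mul_smul, mul_one, sub_mul, one_mul, hJ, sub_self,
      smul_zero, add_zero]
  rw [e1, Matrix.smul_mul]
  congr 1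
  rw [sub_mul, one_mul, mul_sub, mul_one, hJ, sub_self, sub_zero]
end

section
/- Let N ≥ 2. For each function ℓ : {1,…,N} → {1,…,N}, define K(ℓ) = (1/2)I + (1/2)Σᵢ₌₁ᴺ eᵢ e_{ℓ(i)}ᵀ, and let E = N^{−N} Σ_ℓ K(ℓ) ⊗ K(ℓ) (average over all N^N functions ℓ). Let R = ((I−J) ⊗ (I−J)) · E, let u = Σᵢ₌₁ᴺ eᵢ ⊗ eᵢ ∈ ℝ^{N²}, and let v = (1/√(N−1))·(u − (1/N)𝟙_{N²}) where 𝟙_{N²} is the all-ones vector in ℝ^{N²}. Then R = (1/4)·(I−J)⊗(I−J) + ((N−1)/(4N))·vvᵀ, and the spectral radius of R equals ρ(R) = 1/2 − 1/(4N). -/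
open Matrix Kronecker Finset

/-- The spectral radius of a real square matrix: the maximum modulus of its
complex eigenvalues. -/
noncomputable def specRad {n : Type*} [Fintype n] [DecidableEq n]
    (A : Matrix n n ℝ) : ℝ :=
  (spectralRadius ℂ (A.map Complex.ofReal)).toReal


lemma sum_eval_single {α β : Type*} [Fintype α] [DecidableEq α] [Fintype β] [DecidableEq β]
    (a : α) (F : β → ℝ) :
    ∑ ℓ : α → β, F (ℓ a) = (Fintype.card β : ℝ) ^ (Fintype.card α - 1) * ∑ x, F x := by
  rw [← Equiv.sum_comp (Equiv.funSplitAt a β).symm (fun ℓ => F (ℓ a))]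
  simp only [Fintype.sum_prod_type, Equiv.funSplitAt_symm_apply, dif_pos rfl]
  rw [Finset.sum_comm]
  simp [Finset.sum_const, Finset.card_univ, mul_comm]

lemma sum_eval_double {α β : Type*} [Fintype α] [DecidableEq α] [Fintype β] [DecidableEq β]
    (a c : α) (hac : a ≠ c) (F G : β → ℝ) :
    ∑ ℓ : α → β, F (ℓ a) * G (ℓ c) =
      (Fintype.card β : ℝ) ^ (Fintype.card α - 2) * ((∑ x, F x) * ∑ x, G x) := by
  rw [← Equiv.sum_comp (Equiv.funSplitAt a β).symm (fun ℓ => F (ℓ a) * G (ℓ c))]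
  simp only [Fintype.sum_prod_type, Equiv.funSplitAt_symm_apply, dif_pos rfl,
    dif_neg (Ne.symm hac), dite_true]
  have : ∀ x : β, ∑ g : { j // j ≠ a } → β, F x * G (g ⟨c, Ne.symm hac⟩)
      = F x * ((Fintype.card β : ℝ) ^ (Fintype.card { j // j ≠ a } - 1) * ∑ y, G y) := by
    intro x
    rw [← Finset.mul_sum, sum_eval_single (⟨c, Ne.symm hac⟩ : { j // j ≠ a }) G]
  rw [Finset.sum_congr rfl (fun x _ => this x), ← Finset.sum_mul]
  have hcard : Fintype.card { j // j ≠ a } = Fintype.card α - 1 := by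
    simp [Fintype.card_subtype_compl]
  rw [hcard]
  have h2 : Fintype.card α - 1 - 1 = Fintype.card α - 2 := by omega
  rw [h2]; ring

lemma S_entry {N : ℕ} (ℓ : Fin N → Fin N) (a b : Fin N) :
    (∑ i, Matrix.single i (ℓ i) (1 : ℝ)) a b = if ℓ a = b then 1 else 0 := by
  simp [Matrix.sum_apply, Matrix.single, Matrix.of_apply, ite_and,
    Finset.sum_ite_eq]

lemma count_one {N : ℕ} (a b : Fin N) :
    ∑ ℓ : Fin N → Fin N, (if ℓ a = b then (1:ℝ) else 0) = (N:ℝ)^(N-1) := by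
  rw [sum_eval_single a (fun x => if x = b then (1:ℝ) else 0)]
  simp

lemma count_two {N : ℕ} (a c b d : Fin N) (h : a ≠ c) :
    ∑ ℓ : Fin N → Fin N, (if ℓ a = b then (1:ℝ) else 0) * (if ℓ c = d then (1:ℝ) else 0)
      = (N:ℝ)^(N-2) := by
  rw [sum_eval_double a c h (fun x => if x = b then (1:ℝ) else 0)
    (fun x => if x = d then (1:ℝ) else 0)]
  simp


set_option maxHeartbeats 1000000 in
lemma Esum {N : ℕ} (hN : 2 ≤ N) (K : (Fin N → Fin N) → Matrix (Fin N) (Fin N) ℝ)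
    (hK : ∀ ℓ a b, K ℓ a b =
      1/2 * (if a = b then (1:ℝ) else 0) + 1/2 * (if ℓ a = b then (1:ℝ) else 0))
    (u w : Fin N × Fin N → ℝ)
    (hu : ∀ q, u q = if q.1 = q.2 then (1:ℝ) else 0)
    (hw : ∀ q, w q = (if q.1 = q.2 then (1:ℝ) else 0) - (N:ℝ)⁻¹) :
    ((N:ℝ)^N)⁻¹ • ∑ ℓ : Fin N → Fin N, (K ℓ) ⊗ₖ (K ℓ) =
      (1/4 : ℝ) • (1 : Matrix (Fin N × Fin N) (Fin N × Fin N) ℝ)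
      + (1/4 : ℝ) • ((1 : Matrix (Fin N) (Fin N) ℝ) ⊗ₖ Jmat N)
      + (1/4 : ℝ) • (Jmat N ⊗ₖ (1 : Matrix (Fin N) (Fin N) ℝ))
      + (1/4 : ℝ) • (Jmat N ⊗ₖ Jmat N)
      + ((1:ℝ)/(4*N)) • Matrix.vecMulVec u w := by
  have hNR : (N:ℝ) ≠ 0 := Nat.cast_ne_zero.mpr (by omega)
  have hp1 : (N:ℝ)^N = (N:ℝ)^(N-1) * N := by
    rw [← pow_succ]; congr 1; omega
  have hp2 : (N:ℝ)^(N-1) = (N:ℝ)^(N-2) * N := by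
    rw [← pow_succ]; congr 1; omega
  have hpow : ((N:ℝ)^N) ≠ 0 := pow_ne_zero _ hNR
  ext ⟨a, c⟩ ⟨b, d⟩
  simp only [Matrix.smul_apply, Matrix.sum_apply, Matrix.kroneckerMap_apply,
    Matrix.add_apply, Matrix.vecMulVec_apply, Jmat, Matrix.of_apply, smul_eq_mul,
    Matrix.one_apply, Prod.mk.injEq, hu, hw]
  have expand : ∀ ℓ : Fin N → Fin N, K ℓ a b * K ℓ c d =
      (1/4 * ((if a = b then (1:ℝ) else 0) * (if c = d then (1:ℝ) else 0)))
      + (1/4 * (if a = b then (1:ℝ) else 0)) * (if ℓ c = d then (1:ℝ) else 0)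
      + (1/4 * (if c = d then (1:ℝ) else 0)) * (if ℓ a = b then (1:ℝ) else 0)
      + 1/4 * ((if ℓ a = b then (1:ℝ) else 0) * (if ℓ c = d then (1:ℝ) else 0)) := by
    intro ℓ; rw [hK, hK]; ring
  rw [Finset.sum_congr rfl (fun ℓ _ => expand ℓ)]
  rw [Finset.sum_add_distrib, Finset.sum_add_distrib, Finset.sum_add_distrib,
    Finset.sum_const, ← Finset.mul_sum, ← Finset.mul_sum, ← Finset.mul_sum,
    count_one, count_one]
  have hcard : (Finset.univ : Finset (Fin N → Fin N)).card = N^N := by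
    simp [Finset.card_univ]
  rw [hcard, nsmul_eq_mul]
  push_cast
  by_cases hac : a = c
  · subst hac
    have hlast : ∀ ℓ : Fin N → Fin N,
        (if ℓ a = b then (1:ℝ) else 0) * (if ℓ a = d then (1:ℝ) else 0)
        = if b = d then (if ℓ a = b then (1:ℝ) else 0) else 0 := by
      intro ℓ; split_ifs <;> simp_all
    rw [Finset.sum_congr rfl (fun ℓ _ => hlast ℓ)]
    have hM : (N:ℝ)^(N-2) ≠ 0 := pow_ne_zero _ hNR
    by_cases hbd : b = d
    · subst hbd
      simp only [eq_self_iff_true, if_true]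
      rw [count_one, hp1, hp2]
      split_ifs <;> first | tauto | (field_simp; ring)
    · simp only [if_neg hbd]
      rw [Finset.sum_const_zero]
      rw [hp1, hp2]
      split_ifs <;> first | tauto | (field_simp; ring)
  · have hM : (N:ℝ)^(N-2) ≠ 0 := pow_ne_zero _ hNR
    have hlast := count_two a c b d hac
    rw [hlast]
    simp only [if_neg hac]
    rw [hp1, hp2]
    split_ifs <;> first | tauto | (field_simp; ring)

lemma mul_vecMulVec {n : Type*} [Fintype n] {α : Type*} [CommRing α] (M : Matrix n n α)
    (x y : n → α) : M * Matrix.vecMulVec x y = Matrix.vecMulVec (M *ᵥ x) y := by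
  ext i j
  simp [Matrix.mul_apply, Matrix.vecMulVec_apply, Matrix.mulVec, dotProduct,
    Finset.sum_mul, mul_assoc]

lemma vecMulVec_mulVec {n : Type*} [Fintype n] {α : Type*} [CommRing α]
    (x y z : n → α) : Matrix.vecMulVec x y *ᵥ z = (y ⬝ᵥ z) • x := by
  ext i
  simp only [Matrix.vecMulVec_apply, Matrix.mulVec, dotProduct, Pi.smul_apply,
    smul_eq_mul, Finset.sum_mul, Finset.mul_sum]
  exact Finset.sum_congr rfl fun k _ => by ring

lemma key_sum {N : ℕ} (hN : 2 ≤ N) (a c : Fin N) :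
    ∑ x, ((if a = x then (1:ℝ) else 0) - (N:ℝ)⁻¹) * ((if c = x then (1:ℝ) else 0) - (N:ℝ)⁻¹)
      = (if a = c then (1:ℝ) else 0) - (N:ℝ)⁻¹ := by
  have hNR : (N:ℝ) ≠ 0 := Nat.cast_ne_zero.mpr (by omega)
  have expand : ∀ x : Fin N,
      ((if a = x then (1:ℝ) else 0) - (N:ℝ)⁻¹) * ((if c = x then (1:ℝ) else 0) - (N:ℝ)⁻¹)
      = (if a = x then (1:ℝ) else 0) * (if c = x then 1 else 0)
        - (N:ℝ)⁻¹ * (if a = x then (1:ℝ) else 0)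
        - (N:ℝ)⁻¹ * (if c = x then (1:ℝ) else 0)
        + (N:ℝ)⁻¹ * (N:ℝ)⁻¹ := fun x => by ring
  rw [Finset.sum_congr rfl fun x _ => expand x]
  rw [Finset.sum_add_distrib, Finset.sum_sub_distrib, Finset.sum_sub_distrib,
    ← Finset.mul_sum, ← Finset.mul_sum, Finset.sum_const, Finset.card_univ]
  simp only [mul_ite, mul_one, mul_zero, ite_mul, one_mul, zero_mul,
    Finset.sum_ite_eq, Finset.mem_univ, if_true, Fintype.card_fin, nsmul_eq_mul]
  by_cases h : a = c
  · subst h; simp; field_simp; ring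
  · rw [if_neg h]
    field_simp
    ring

section SpecHelpers
variable {n : Type*} [Fintype n] [DecidableEq n]

lemma spec_subset (P W : Matrix n n ℂ) (a b : ℂ)
    (hPP : P*P = P) (hPW : P*W = W) (hWP : W*P = W) (hWW : W*W = W) :
    spectrum ℂ (a•P + b•W) ⊆ {0, a, a+b} := by
  intro μ hμ
  by_contra hcon
  simp only [Set.mem_insert_iff, Set.mem_singleton_iff, not_or] at hcon
  obtain ⟨h0, ha, hab⟩ := hcon
  have hμa : μ - a ≠ 0 := sub_ne_zero.mpr ha
  have hμab : μ - a - b ≠ 0 := by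
    intro h; apply hab; linear_combination h
  rw [spectrum.mem_iff] at hμ
  apply hμ
  set x : ℂ := μ⁻¹ with hx
  set y : ℂ := a/(μ*(μ-a)) with hy
  set z : ℂ := b/((μ-a)*(μ-a-b)) with hz
  set M := algebraMap ℂ (Matrix n n ℂ) μ - (a•P + b•W) with hM
  set B := x•(1 : Matrix n n ℂ) + y•P + z•W with hB
  have halg : algebraMap ℂ (Matrix n n ℂ) μ = μ • 1 := by
    rw [Algebra.algebraMap_eq_smul_one]
  have hprod : M * B = (μ*x)•(1 : Matrix n n ℂ)
      + (μ*y - a*x - a*y)•P + (μ*z - a*z - b*x - b*y - b*z)•W := by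
    rw [hM, hB, halg]
    simp only [sub_mul, add_mul, mul_add, smul_mul_assoc, mul_smul_comm,
      hPP, hPW, hWP, hWW, one_mul, mul_one, smul_smul]
    module
  have h1 : μ * x = 1 := mul_inv_cancel₀ h0
  have h2 : μ*y - a*x - a*y = 0 := by
    rw [hx, hy]; field_simp; ring
  have h3 : μ*z - a*z - b*x - b*y - b*z = 0 := by
    rw [hx, hy, hz]; field_simp; ring
  have hMB : M * B = 1 := by
    rw [hprod, h1, h2, h3]; simp
  exact ⟨⟨M, B, hMB, mul_eq_one_comm.mp hMB⟩, rfl⟩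

lemma mem_spec (A : Matrix n n ℂ) (μ : ℂ) (v : n → ℂ) (hv : v ≠ 0)
    (hAv : A *ᵥ v = μ • v) : μ ∈ spectrum ℂ A := by
  rw [spectrum.mem_iff]
  intro hunit
  rw [Matrix.isUnit_iff_isUnit_det] at hunit
  have hdet : (algebraMap ℂ (Matrix n n ℂ) μ - A).det = 0 := by
    rw [← Matrix.exists_mulVec_eq_zero_iff]
    refine ⟨v, hv, ?_⟩
    rw [Matrix.sub_mulVec, hAv, Algebra.algebraMap_eq_smul_one, Matrix.smul_mulVec,
      Matrix.one_mulVec, sub_self]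
  rw [hdet] at hunit
  exact (by simpa using hunit : False)

lemma radius_eq (A : Matrix n n ℂ) (lam : ℝ)
    (hsub : spectrum ℂ A ⊆ {0, (1/4 : ℂ), (lam : ℂ)}) (hmem : (lam:ℂ) ∈ spectrum ℂ A)
    (h4 : (1/4:ℝ) ≤ lam) :
    (spectralRadius ℂ A).toReal = lam := by
  have hnorm : ‖(lam:ℂ)‖ = lam := by
    rw [Complex.norm_real, Real.norm_eq_abs, abs_of_nonneg (by linarith)]
  have hrad : spectralRadius ℂ A = (‖(lam:ℂ)‖₊ : ENNReal) := by
    apply le_antisymm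
    · rw [spectralRadius]
      apply iSup₂_le
      intro k hk
      rcases hsub hk with h | h | h
      · simp [h]
      · subst h
        refine ENNReal.coe_le_coe.mpr ?_
        have : ‖(1/4 : ℂ)‖ ≤ ‖(lam:ℂ)‖ := by
          rw [hnorm]; simpa using h4
        exact this
      · subst h; exact le_refl _
    · rw [spectralRadius]
      exact le_iSup₂ (f := fun k _ => (‖k‖₊ : ENNReal)) _ hmem
  rw [hrad]
  simp only [ENNReal.coe_toReal, coe_nnnorm, hnorm]

end SpecHelpers

lemma map_mul_ofReal {n : Type*} [Fintype n] (M P : Matrix n n ℝ) :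
    (M * P).map Complex.ofReal = M.map Complex.ofReal * P.map Complex.ofReal := by
  ext i j
  simp only [Matrix.map_apply, Matrix.mul_apply]
  push_cast
  rfl

lemma map_mulVec {n : Type*} [Fintype n] (M : Matrix n n ℝ) (x : n → ℝ) (i : n) :
    (M.map Complex.ofReal *ᵥ (fun q => ((x q : ℝ) : ℂ))) i = ((M *ᵥ x) i : ℝ) := by
  simp only [Matrix.mulVec, dotProduct, Matrix.map_apply]
  push_cast
  rfl



theorem stmt18 {N : ℕ} (hN : 2 ≤ N)
    -- the Push-Sum update matrices `K(ℓ) = (1/2)I + (1/2)Σᵢ eᵢ e_{ℓ(i)}ᵀ`: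
    (K : (Fin N → Fin N) → Matrix (Fin N) (Fin N) ℝ)
    (hKdef : ∀ ℓ, K ℓ =
      (1 / 2 : ℝ) • 1 + (1 / 2 : ℝ) • ∑ i, Matrix.single i (ℓ i) (1 : ℝ))
    -- `E = N^{-N} Σ_ℓ K(ℓ) ⊗ K(ℓ)`:
    (E : Matrix (Fin N × Fin N) (Fin N × Fin N) ℝ)
    (hE : E = ((N : ℝ) ^ N)⁻¹ • ∑ ℓ : Fin N → Fin N, (K ℓ ⊗ₖ K ℓ))
    (R : Matrix (Fin N × Fin N) (Fin N × Fin N) ℝ)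
    (hR : R = ((1 - Jmat N) ⊗ₖ (1 - Jmat N)) * E)
    -- `u = Σᵢ eᵢ ⊗ eᵢ`:
    (u : Fin N × Fin N → ℝ)
    (hu : ∀ q, u q = ∑ i, (Pi.single i (1 : ℝ) : Fin N → ℝ) q.1 * (Pi.single i (1 : ℝ) : Fin N → ℝ) q.2)
    -- `v = (1/√(N−1))(u − (1/N)𝟙_{N²})`:
    (v : Fin N × Fin N → ℝ)
    (hv : v = (Real.sqrt ((N : ℝ) - 1))⁻¹ • (u - fun _ => (N : ℝ)⁻¹)) :
    R = (1 / 4 : ℝ) • ((1 - Jmat N) ⊗ₖ (1 - Jmat N)) +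
        (((N : ℝ) - 1) / (4 * N)) • Matrix.vecMulVec v v ∧
      specRad R = 1 / 2 - 1 / (4 * N) := by
  have hNR : (N:ℝ) ≠ 0 := Nat.cast_ne_zero.mpr (by omega)
  have hN2 : (2:ℝ) ≤ (N:ℝ) := by exact_mod_cast hN
  have hN1 : (N:ℝ) - 1 ≠ 0 := by nlinarith
  have hN1' : (0:ℝ) ≤ (N:ℝ) - 1 := by linarith
  set w : Fin N × Fin N → ℝ := fun q => (if q.1 = q.2 then (1:ℝ) else 0) - (N:ℝ)⁻¹ with hwdef
  have hu' : ∀ q : Fin N × Fin N, u q = if q.1 = q.2 then (1:ℝ) else 0 := by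
    intro q
    rw [hu]
    simp [Pi.single_apply, ite_and, Finset.sum_ite_eq, eq_comm]
  have hK' : ∀ ℓ (a b : Fin N), K ℓ a b =
      1/2 * (if a = b then (1:ℝ) else 0) + 1/2 * (if ℓ a = b then (1:ℝ) else 0) := by
    intro ℓ a b
    rw [hKdef]
    simp [Matrix.add_apply, Matrix.smul_apply, Matrix.one_apply, S_entry, smul_eq_mul]
  have hEexp : E = (1/4 : ℝ) • (1 : Matrix (Fin N × Fin N) (Fin N × Fin N) ℝ)
      + (1/4 : ℝ) • ((1 : Matrix (Fin N) (Fin N) ℝ) ⊗ₖ Jmat N)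
      + (1/4 : ℝ) • (Jmat N ⊗ₖ (1 : Matrix (Fin N) (Fin N) ℝ))
      + (1/4 : ℝ) • (Jmat N ⊗ₖ Jmat N)
      + ((1:ℝ)/(4*N)) • Matrix.vecMulVec u w := by
    rw [hE, Esum hN K hK' u w hu' (fun q => rfl)]
  have hJJ : Jmat N * Jmat N = Jmat N := by
    ext i j
    simp [Jmat, Matrix.mul_apply, Finset.sum_const, Finset.card_univ]
    field_simp
  have h1J : (1 - Jmat N) * Jmat N = 0 := by
    rw [sub_mul, one_mul, hJJ, sub_self]
  have hPu : ((1 - Jmat N) ⊗ₖ (1 - Jmat N)) *ᵥ u = w := by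
    ext ⟨a, c⟩
    simp only [Matrix.mulVec, dotProduct, Fintype.sum_prod_type,
      Matrix.kroneckerMap_apply, Matrix.sub_apply, Matrix.one_apply, Jmat,
      Matrix.of_apply, hu']
    have collapse : ∀ x : Fin N,
        ∑ y, ((if a = x then (1:ℝ) else 0) - (N:ℝ)⁻¹) * ((if c = y then (1:ℝ) else 0) - (N:ℝ)⁻¹)
            * (if x = y then (1:ℝ) else 0)
        = ((if a = x then (1:ℝ) else 0) - (N:ℝ)⁻¹) * ((if c = x then (1:ℝ) else 0) - (N:ℝ)⁻¹) := by
      intro x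
      rw [Finset.sum_eq_single x]
      · simp
      · intro y _ hy; simp [if_neg (fun h : x = y => hy h.symm)]
      · intro h; exact absurd (Finset.mem_univ x) h
    rw [Finset.sum_congr rfl fun x _ => collapse x, key_sum hN a c]
  have hPW : ((1 - Jmat N) ⊗ₖ (1 - Jmat N)) * Matrix.vecMulVec u w = Matrix.vecMulVec w w := by
    rw [_root_.mul_vecMulVec, hPu]
  have hvw : v = (Real.sqrt ((N:ℝ) - 1))⁻¹ • w := by
    rw [hv]; funext q; simp [hu', hwdef]
  have hsq : (Real.sqrt ((N:ℝ) - 1))⁻¹ * (Real.sqrt ((N:ℝ) - 1))⁻¹ = ((N:ℝ) - 1)⁻¹ := by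
    rw [← mul_inv, Real.mul_self_sqrt hN1']
  have hww : Matrix.vecMulVec v v = ((N:ℝ) - 1)⁻¹ • Matrix.vecMulVec w w := by
    rw [hvw]
    ext i j
    simp only [Matrix.vecMulVec_apply, Pi.smul_apply, smul_eq_mul, Matrix.smul_apply]
    rw [← hsq]; ring
  have hR2 : R = (1 / 4 : ℝ) • ((1 - Jmat N) ⊗ₖ (1 - Jmat N)) +
      (((N : ℝ) - 1) / (4 * N)) • Matrix.vecMulVec v v := by
    rw [hR, hEexp]
    rw [mul_add, mul_add, mul_add, mul_add]
    rw [Matrix.mul_smul, Matrix.mul_smul, Matrix.mul_smul, Matrix.mul_smul, Matrix.mul_smul]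
    rw [mul_one, hPW]
    rw [← mul_kronecker_mul, ← mul_kronecker_mul, ← mul_kronecker_mul]
    rw [h1J, Matrix.kronecker_zero, Matrix.zero_kronecker, Matrix.zero_kronecker]
    simp only [smul_zero, add_zero]
    rw [hww, smul_smul]
    congr 2
    field_simp
  refine ⟨hR2, ?_⟩
  -- Part 2: spectral radius
  have hlam : (1/4:ℝ) + ((N:ℝ)-1)/(4*N) = 1/2 - 1/(4*N) := by field_simp; ring
  have hP1 : (1 - Jmat N) * (1 - Jmat N) = 1 - Jmat N := by
    rw [mul_sub, mul_one, h1J, sub_zero]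
  have hPP : ((1 - Jmat N) ⊗ₖ (1 - Jmat N)) * ((1 - Jmat N) ⊗ₖ (1 - Jmat N))
      = (1 - Jmat N) ⊗ₖ (1 - Jmat N) := by
    rw [← mul_kronecker_mul, hP1]
  have hPw : ((1 - Jmat N) ⊗ₖ (1 - Jmat N)) *ᵥ w = w := by
    conv_lhs => rw [← hPu]
    rw [Matrix.mulVec_mulVec, hPP, hPu]
  have hPv : ((1 - Jmat N) ⊗ₖ (1 - Jmat N)) *ᵥ v = v := by
    rw [hvw, Matrix.mulVec_smul, hPw]
  have hsumww : ∑ q : Fin N × Fin N, w q * w q = (N:ℝ) - 1 := by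
    rw [Fintype.sum_prod_type]
    have inner : ∀ a : Fin N, ∑ c : Fin N, w (a, c) * w (a, c) = 1 - (N:ℝ)⁻¹ := by
      intro a
      have := key_sum hN a a
      simpa using this
    rw [Finset.sum_congr rfl fun a _ => inner a, Finset.sum_const, Finset.card_univ,
      Fintype.card_fin, nsmul_eq_mul]
    field_simp
  have hnormv : v ⬝ᵥ v = 1 := by
    rw [hvw]
    simp only [dotProduct, Pi.smul_apply, smul_eq_mul]
    have : ∀ q : Fin N × Fin N, (Real.sqrt ((N:ℝ)-1))⁻¹ * w q * ((Real.sqrt ((N:ℝ)-1))⁻¹ * w q)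
        = ((N:ℝ)-1)⁻¹ * (w q * w q) := by
      intro q; rw [← hsq]; ring
    rw [Finset.sum_congr rfl fun q _ => this q, ← Finset.mul_sum, hsumww]
    field_simp
  have hWW : Matrix.vecMulVec v v * Matrix.vecMulVec v v = Matrix.vecMulVec v v := by
    rw [_root_.mul_vecMulVec, _root_.vecMulVec_mulVec, hnormv, one_smul]
  have hPWv : ((1 - Jmat N) ⊗ₖ (1 - Jmat N)) * Matrix.vecMulVec v v = Matrix.vecMulVec v v := by
    rw [_root_.mul_vecMulVec, hPv]
  have hPsym : ((1 - Jmat N) ⊗ₖ (1 - Jmat N))ᵀ = (1 - Jmat N) ⊗ₖ (1 - Jmat N) := by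
    have hJsym : (Jmat N)ᵀ = Jmat N := by ext i j; simp [Jmat]
    have h1Jsym : (1 - Jmat N)ᵀ = 1 - Jmat N := by
      rw [Matrix.transpose_sub, Matrix.transpose_one, hJsym]
    rw [← kroneckerMap_transpose, h1Jsym]
  have hWsym : (Matrix.vecMulVec v v)ᵀ = Matrix.vecMulVec v v := by
    ext i j; simp [Matrix.transpose_apply, Matrix.vecMulVec_apply, mul_comm]
  have hWP : Matrix.vecMulVec v v * ((1 - Jmat N) ⊗ₖ (1 - Jmat N)) = Matrix.vecMulVec v v := by
    rw [← Matrix.transpose_transpose (Matrix.vecMulVec v v * ((1 - Jmat N) ⊗ₖ (1 - Jmat N))),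
      Matrix.transpose_mul, hPsym, hWsym, hPWv, hWsym]
  have hRv : R *ᵥ v = (1/2 - 1/(4*(N:ℝ))) • v := by
    rw [hR2, Matrix.add_mulVec, Matrix.smul_mulVec, Matrix.smul_mulVec,
      hPv, _root_.vecMulVec_mulVec, hnormv, one_smul, ← add_smul, hlam]
  -- complexify
  set A := R.map Complex.ofReal with hA
  set Pc := ((1 - Jmat N) ⊗ₖ (1 - Jmat N)).map Complex.ofReal with hPc
  set Wc := (Matrix.vecMulVec v v).map Complex.ofReal with hWc
  set vc : Fin N × Fin N → ℂ := fun q => ((v q : ℝ) : ℂ) with hvc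
  have hAexp : A = (1/4 : ℂ) • Pc + (((N:ℂ)-1)/(4*N)) • Wc := by
    rw [hA, hR2, hPc, hWc]
    ext q r
    simp only [Matrix.map_apply, Matrix.add_apply, Matrix.smul_apply, smul_eq_mul]
    push_cast
    ring
  have hPPc : Pc * Pc = Pc := by rw [hPc, ← map_mul_ofReal, hPP]
  have hWWc : Wc * Wc = Wc := by rw [hWc, ← map_mul_ofReal, hWW]
  have hPWc : Pc * Wc = Wc := by rw [hPc, hWc, ← map_mul_ofReal, hPWv]
  have hWPc : Wc * Pc = Wc := by rw [hPc, hWc, ← map_mul_ofReal, hWP]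
  have hsubC : spectrum ℂ A ⊆ {0, (1/4 : ℂ), ((1/2 - 1/(4*(N:ℝ)) : ℝ) : ℂ)} := by
    rw [hAexp]
    have hcast : ((1/2 - 1/(4*(N:ℝ)) : ℝ) : ℂ) = (1/4 : ℂ) + ((N:ℂ)-1)/(4*N) := by
      have hNC : (N:ℂ) ≠ 0 := Nat.cast_ne_zero.mpr (by omega)
      push_cast
      field_simp
      ring
    rw [hcast]
    exact spec_subset Pc Wc _ _ hPPc hPWc hWPc hWWc
  have hvcne : vc ≠ 0 := by
    have hi0 : (0:ℕ) < N := by omega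
    set i0 : Fin N := ⟨0, hi0⟩
    have hsqrtne : Real.sqrt ((N:ℝ) - 1) ≠ 0 := by
      refine ne_of_gt (Real.sqrt_pos.mpr ?_)
      linarith
    have hvne : v (i0, i0) ≠ 0 := by
      have hval : v (i0, i0) = (Real.sqrt ((N:ℝ)-1))⁻¹ * (1 - (N:ℝ)⁻¹) := by
        rw [hvw]; simp [hwdef]
      rw [hval]
      apply mul_ne_zero (inv_ne_zero hsqrtne)
      have : (N:ℝ)⁻¹ < 1 := by
        rw [inv_lt_one_iff₀]
        right; linarith
      linarith
    intro h
    have h2 := congrFun h (i0, i0)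
    rw [hvc] at h2
    simp only [Pi.zero_apply, Complex.ofReal_eq_zero] at h2
    exact hvne h2
  have hAv : A *ᵥ vc = (((1/2 - 1/(4*(N:ℝ)) : ℝ) : ℂ)) • vc := by
    rw [hA, hvc]
    ext q
    rw [map_mulVec]
    have := congrFun hRv q
    simp only [Pi.smul_apply, smul_eq_mul] at this ⊢
    rw [this]
    push_cast
    ring
  have hmemC : ((1/2 - 1/(4*(N:ℝ)) : ℝ) : ℂ) ∈ spectrum ℂ A :=
    mem_spec A _ vc hvcne hAv
  have h4 : (1/4:ℝ) ≤ 1/2 - 1/(4*(N:ℝ)) := by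
    have h8 : 1/(4*(N:ℝ)) ≤ 1/8 := by
      rw [div_le_div_iff₀ (by linarith) (by norm_num : (0:ℝ) < 8)]
      linarith
    linarith
  have hrad := radius_eq A (1/2 - 1/(4*(N:ℝ))) hsubC hmemC h4
  unfold specRad
  rw [← hA]
  exact_mod_cast hrad
end

section
/- Let G be a connected simple undirected graph on the vertex set {1,…,N} with N ≥ 2, with adjacency matrix A, degree matrix D = diag(d₁,…,d_N) where dᵢ is the degree of vertex i, and Laplacian matrix L = D − A. For each i ∈ {1,…,N}, define the BWGossip update matrix Kᵢ = I − eᵢeᵢᵀ(D+I)^{−1}L. Then each Kᵢ is row-stochastic with strictly positive diagonal entries, the uniform average satisfies (1/N)Σᵢ₌₁ᴺ Kᵢ = I − (1/N)(D+I)^{−1}L, and this average matrix is primitive. -/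
open Matrix Finset

lemma sum_stdBasis_diag {N : ℕ} : ∑ i : Fin N, Matrix.single i i (1:ℝ) = 1 := by
  ext k j
  rw [Matrix.sum_apply, Matrix.one_apply]
  simp only [Matrix.single, Matrix.of_apply, ite_and]
  rw [Finset.sum_ite_eq' Finset.univ k fun x => if x = j then (1:ℝ) else 0]
  simp [eq_comm]

lemma stdBasis_mul_apply {N : ℕ} (i k j : Fin N) (B : Matrix (Fin N) (Fin N) ℝ) :
    (Matrix.single i i (1:ℝ) * B) k j = if k = i then B i j else 0 := by
  simp [Matrix.mul_apply, Matrix.single, Matrix.of_apply, ite_and, eq_comm]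

lemma pow_entry_pos_aux {N : ℕ} (G : SimpleGraph (Fin N)) (T : Matrix (Fin N) (Fin N) ℝ)
    (hnn : ∀ i j, 0 ≤ T i j) (hdiag : ∀ i, 0 < T i i)
    (hadj : ∀ i j, G.Adj i j → 0 < T i j) :
    ∀ m : ℕ, ∀ i j : Fin N, ∀ w : G.Walk i j, w.length ≤ m → 0 < (T ^ m) i j := by
  have hpownn : ∀ m (i j : Fin N), 0 ≤ (T ^ m) i j := by
    intro m
    induction m with
    | zero => intro i j; by_cases h : i = j <;> simp [Matrix.one_apply, h]
    | succ n ih =>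
        intro i j
        rw [pow_succ, Matrix.mul_apply]
        exact Finset.sum_nonneg fun k _ => mul_nonneg (ih i k) (hnn k j)
  intro m
  induction m with
  | zero =>
      intro i j w hw
      have := SimpleGraph.Walk.eq_of_length_eq_zero (Nat.le_zero.mp hw)
      subst this
      simp [Matrix.one_apply]
  | succ n ih =>
      intro i j w hw
      rw [pow_succ', Matrix.mul_apply]
      cases w with
      | nil =>
          refine Finset.sum_pos' (fun k _ => mul_nonneg (hnn i k) (hpownn n k i))
            ⟨i, Finset.mem_univ i, ?_⟩
          exact mul_pos (hdiag i) (ih i i SimpleGraph.Walk.nil (by simp))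
      | @cons _ k _ h p =>
          refine Finset.sum_pos' (fun x _ => mul_nonneg (hnn i x) (hpownn n x j))
            ⟨k, Finset.mem_univ k, ?_⟩
          exact mul_pos (hadj i k h) (ih k j p (by simpa using hw))

theorem stmt19 {N : ℕ} (hN : 2 ≤ N)
    (G : SimpleGraph (Fin N)) [DecidableRel G.Adj] (hconn : G.Connected)
    -- adjacency matrix `A`, degree matrix `D`, Laplacian `L = D − A`:
    (A D L : Matrix (Fin N) (Fin N) ℝ)
    (hA : A = G.adjMatrix ℝ)
    (hD : D = Matrix.diagonal fun i => (G.degree i : ℝ))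
    (hL : L = D - A)
    -- the BWGossip update matrices `Kᵢ = I − eᵢeᵢᵀ (D+I)⁻¹ L`:
    (K : Fin N → Matrix (Fin N) (Fin N) ℝ)
    (hKdef : ∀ i, K i = 1 - Matrix.single i i (1 : ℝ) * (D + 1)⁻¹ * L) :
    (∀ i, RowStochastic (K i) ∧ ∀ j, 0 < K i j j) ∧
      (N : ℝ)⁻¹ • (∑ i, K i) = 1 - (N : ℝ)⁻¹ • ((D + 1)⁻¹ * L) ∧
      _root_.IsPrimitive (1 - (N : ℝ)⁻¹ • ((D + 1)⁻¹ * L)) := by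
  set d : Fin N → ℝ := fun i => (G.degree i : ℝ) with hd
  have hd0 : ∀ i, 0 ≤ d i := fun i => Nat.cast_nonneg _
  have hdpos : ∀ i, 0 < d i + 1 := fun i => by have := hd0 i; linarith
  have hD1 : D + 1 = Matrix.diagonal (fun i => d i + 1) := by
    rw [hD, ← Matrix.diagonal_one, Matrix.diagonal_add]
  have hinv : (D + 1)⁻¹ = Matrix.diagonal (fun i => (d i + 1)⁻¹) := by
    apply Matrix.inv_eq_right_inv
    rw [hD1, Matrix.diagonal_mul_diagonal, ← Matrix.diagonal_one]
    have : (fun i => (d i + 1) * (d i + 1)⁻¹) = fun _ => (1:ℝ) :=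
      funext fun i => mul_inv_cancel₀ (ne_of_gt (hdpos i))
    rw [this]
  have hM : ∀ k j, ((D + 1)⁻¹ * L) k j = (d k + 1)⁻¹ * L k j := by
    intro k j; rw [hinv, Matrix.diagonal_mul]
  have hLent : ∀ k j, L k j = (if k = j then d k else 0) - G.adjMatrix ℝ k j := by
    intro k j
    rw [hL, hD, hA, Matrix.sub_apply, Matrix.diagonal_apply]
  have hAnn : ∀ k j, 0 ≤ G.adjMatrix ℝ k j := by
    intro k j; by_cases h : G.Adj k j <;> simp [h]
  have hArow : ∀ k, ∑ j, G.adjMatrix ℝ k j = d k := by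
    intro k
    simp [SimpleGraph.adjMatrix_apply, hd, SimpleGraph.degree,
      SimpleGraph.neighborFinset_eq_filter, Finset.sum_boole]
  have hLrow : ∀ k, ∑ j, L k j = 0 := by
    intro k
    simp only [hLent, Finset.sum_sub_distrib, hArow, Finset.sum_ite_eq, Finset.mem_univ,
      if_true, sub_self]
  have hLdiag : ∀ k, L k k = d k := by
    intro k; rw [hLent]; simp
  have hLoff : ∀ k j, k ≠ j → L k j = -G.adjMatrix ℝ k j := by
    intro k j h; rw [hLent, if_neg h, zero_sub]
  -- entries of K i
  have hKent : ∀ i k j, K i k j =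
      (if k = j then (1:ℝ) else 0) - (if k = i then (d i + 1)⁻¹ * L i j else 0) := by
    intro i k j
    rw [hKdef, Matrix.sub_apply, Matrix.one_apply, mul_assoc, stdBasis_mul_apply]
    congr 1
    by_cases h : k = i <;> simp [h, hM]
  have hfrac_lt : ∀ i, (d i + 1)⁻¹ * d i < 1 := by
    intro i
    have h1 : (d i + 1)⁻¹ * d i < (d i + 1)⁻¹ * (d i + 1) :=
      mul_lt_mul_of_pos_left (by linarith) (inv_pos.mpr (hdpos i))
    rwa [inv_mul_cancel₀ (ne_of_gt (hdpos i))] at h1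
  have hfrac_nn : ∀ i, 0 ≤ (d i + 1)⁻¹ * d i := fun i =>
    mul_nonneg (inv_nonneg.mpr (le_of_lt (hdpos i))) (hd0 i)
  refine ⟨?_, ?_, ?_⟩
  · -- row-stochastic with positive diagonal
    intro i
    refine ⟨⟨?_, ?_⟩, ?_⟩
    · intro k j
      rw [hKent]
      by_cases hk : k = i
      · subst hk
        by_cases hj : k = j
        · subst hj
          rw [if_pos rfl, if_pos rfl, hLdiag]
          linarith [hfrac_lt k]
        · rw [if_neg hj, if_pos rfl, hLoff k j hj]
          have := mul_nonneg (inv_nonneg.mpr (le_of_lt (hdpos k))) (hAnn k j)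
          simp only [mul_neg]
          linarith
      · rw [if_neg hk]
        by_cases hj : k = j <;> simp [hj]
    · intro k
      simp only [hKent, Finset.sum_sub_distrib]
      rw [Finset.sum_ite_eq Finset.univ k fun _ => (1:ℝ)]
      by_cases hk : k = i
      · subst hk
        simp [← Finset.mul_sum, hLrow]
      · simp [hk]
    · intro j
      rw [hKent]
      by_cases hj : j = i
      · subst hj
        rw [if_pos rfl, if_pos rfl, hLdiag]
        linarith [hfrac_lt j]
      · simp [hj]
  · -- the average
    have hsum : ∑ i, K i = (N : ℕ) • (1 : Matrix (Fin N) (Fin N) ℝ) - (D + 1)⁻¹ * L := by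
      calc ∑ i, K i = ∑ i : Fin N, (1 - Matrix.single i i (1:ℝ) * (D + 1)⁻¹ * L) := by
            simp_rw [hKdef]
        _ = (N : ℕ) • (1 : Matrix (Fin N) (Fin N) ℝ)
              - (∑ i : Fin N, Matrix.single i i (1:ℝ)) * ((D + 1)⁻¹ * L) := by
            rw [Finset.sum_sub_distrib, Finset.sum_const, Finset.card_univ, Fintype.card_fin,
              Finset.sum_mul]
            simp_rw [mul_assoc]
        _ = (N : ℕ) • (1 : Matrix (Fin N) (Fin N) ℝ) - (D + 1)⁻¹ * L := by
            rw [sum_stdBasis_diag, one_mul]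
    rw [hsum, smul_sub]
    congr 1
    rw [← Nat.cast_smul_eq_nsmul ℝ, smul_smul, inv_mul_cancel₀, one_smul]
    exact_mod_cast (by omega : N ≠ 0)
  · -- primitivity
    set T := 1 - (N : ℝ)⁻¹ • ((D + 1)⁻¹ * L) with hT
    have hNpos : (0:ℝ) < (N:ℝ) := by exact_mod_cast (by omega : 0 < N)
    have hNinv_nn : (0:ℝ) ≤ (N:ℝ)⁻¹ := inv_nonneg.mpr (le_of_lt hNpos)
    have hNinv_le : (N:ℝ)⁻¹ ≤ 1 := by
      rw [inv_le_one_iff₀]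
      right
      exact_mod_cast (by omega : 1 ≤ N)
    have hTent : ∀ k j, T k j = (if k = j then (1:ℝ) else 0) - (N:ℝ)⁻¹ * ((d k + 1)⁻¹ * L k j) := by
      intro k j
      rw [hT, Matrix.sub_apply, Matrix.one_apply, Matrix.smul_apply, hM, smul_eq_mul]
    have hTnn : ∀ k j, 0 ≤ T k j := by
      intro k j
      rw [hTent]
      by_cases h : k = j
      · subst h
        rw [if_pos rfl, hLdiag]
        have h1 : (N:ℝ)⁻¹ * ((d k + 1)⁻¹ * d k) ≤ (d k + 1)⁻¹ * d k :=
          mul_le_of_le_one_left (hfrac_nn k) hNinv_le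
        linarith [hfrac_lt k]
      · rw [if_neg h, hLoff k j h]
        have := mul_nonneg hNinv_nn (mul_nonneg (inv_nonneg.mpr (le_of_lt (hdpos k))) (hAnn k j))
        simp only [mul_neg]
        linarith
    have hTdiag : ∀ k, 0 < T k k := by
      intro k
      rw [hTent, if_pos rfl, hLdiag]
      have h1 : (N:ℝ)⁻¹ * ((d k + 1)⁻¹ * d k) ≤ (d k + 1)⁻¹ * d k :=
        mul_le_of_le_one_left (hfrac_nn k) hNinv_le
      linarith [hfrac_lt k]
    have hTadj : ∀ k j, G.Adj k j → 0 < T k j := by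
      intro k j hkj
      have hne : k ≠ j := G.ne_of_adj hkj
      rw [hTent, if_neg hne, hLoff k j hne]
      have hA1 : G.adjMatrix ℝ k j = 1 := by simp [hkj]
      rw [hA1]
      have : 0 < (N:ℝ)⁻¹ * ((d k + 1)⁻¹ * 1) :=
        mul_pos (inv_pos.mpr hNpos) (by simpa using inv_pos.mpr (hdpos k))
      simp only [mul_neg]
      linarith
    refine ⟨N - 1, by omega, fun i j => ?_⟩
    obtain ⟨w⟩ := hconn.preconnected i j
    have hlen : (SimpleGraph.Walk.toPath w : G.Walk i j).length ≤ N - 1 := by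
      have := SimpleGraph.Walk.IsPath.length_lt (SimpleGraph.Walk.toPath w).2
      rw [Fintype.card_fin] at this
      omega
    exact pow_entry_pos_aux G T hTnn hTdiag hTadj (N - 1) i j _ hlen
end
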